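/- arXiv:1309.4184 — 4 statements merged into one kernel-verified Lean document; each statement's English description precedes it below -/
import Mathlib

section
/- Let (g_{n,k}) be a doubly-indexed family of nonnegative reals with g_{n,k} = 0 for |k| > n, g_{n,k} = g_{n,-k}, and g_{n,k}^2 ≤ g_{2n,0} for all n,k. Let g_n = ∑_k g_{n,k}. Then limsup_n g_n^{1/n} = limsup_n g_{n,0}^{1/n}. -/
open Filter

private lemma aux_tendsto_rpow :
    Tendsto (fun n : ℕ => (2 * (n : ℝ) + 1) ^ (1 / (n : ℝ))) atTop (nhds 1) := by
  have h1 : Tendsto (fun n : ℕ => (n : ℝ) ^ (1 / (n : ℝ))) atTop (nhds 1) :=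
    tendsto_rpow_div.comp tendsto_natCast_atTop_atTop
  have h3 : Tendsto (fun n : ℕ => (3 : ℝ) ^ (1 / (n : ℝ))) atTop (nhds 1) := by
    have hexp : Tendsto (fun n : ℕ => Real.exp (Real.log 3 * (1 / (n : ℝ)))) atTop (nhds 1) := by
      have : Tendsto (fun n : ℕ => Real.log 3 * (1 / (n : ℝ))) atTop (nhds 0) := by
        simpa using tendsto_const_nhds.mul (tendsto_one_div_atTop_nhds_zero_nat : Tendsto (fun n : ℕ => 1 / (n : ℝ)) atTop (nhds 0))
      simpa [Function.comp_def] using (Real.continuous_exp.tendsto 0).comp this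
    refine hexp.congr fun n => ?_
    rw [← Real.rpow_def_of_pos (by norm_num : (0:ℝ) < 3)]
  have hprod : Tendsto (fun n : ℕ => (3 : ℝ) ^ (1 / (n : ℝ)) * (n : ℝ) ^ (1 / (n : ℝ)))
      atTop (nhds 1) := by simpa using h3.mul h1
  refine tendsto_of_tendsto_of_tendsto_of_le_of_le' tendsto_const_nhds hprod ?_ ?_
  · exact Eventually.of_forall fun n =>
      Real.one_le_rpow (by have : (0:ℝ) ≤ (n:ℝ) := Nat.cast_nonneg n; linarith) (by positivity)
  · filter_upwards [eventually_ge_atTop 1] with n hn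
    have hn1 : (1 : ℝ) ≤ (n : ℝ) := by exact_mod_cast hn
    have hle : (2 * (n : ℝ) + 1) ≤ 3 * n := by linarith
    calc (2 * (n : ℝ) + 1) ^ (1 / (n : ℝ)) ≤ (3 * (n : ℝ)) ^ (1 / (n : ℝ)) :=
          Real.rpow_le_rpow (by positivity) hle (by positivity)
      _ = (3 : ℝ) ^ (1 / (n : ℝ)) * (n : ℝ) ^ (1 / (n : ℝ)) :=
          Real.mul_rpow (by norm_num) (by positivity)

private lemma aux_limsup_unbounded {u : ℕ → ℝ}
    (h : ¬ IsBoundedUnder (· ≤ ·) atTop u) : limsup u atTop = 0 := by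
  rw [limsup_eq]
  suffices hs : {a : ℝ | ∀ᶠ n in atTop, u n ≤ a} = ∅ by rw [hs]; exact Real.sInf_empty
  ext a
  simp only [Set.mem_setOf_eq, Set.mem_empty_iff_false, iff_false]
  intro ha
  exact h ⟨a, by simpa [eventually_map] using ha⟩

/-- "Most popular" argument: if `g_{n,k} ≥ 0` vanishes for `|k| > n`, is symmetric in `k`,
and satisfies `g_{n,k}² ≤ g_{2n,0}`, then with `g_n = ∑_k g_{n,k}` we have
`limsup g_n^{1/n} = limsup g_{n,0}^{1/n}`. -/
theorem limsup_sum_eq_limsup_zero (g : ℕ → ℤ → ℝ)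
    (hpos : ∀ n k, 0 ≤ g n k)
    (hsupp : ∀ (n : ℕ) (k : ℤ), (n : ℤ) < |k| → g n k = 0)
    (hsymm : ∀ (n : ℕ) (k : ℤ), g n k = g n (-k))
    (hsq : ∀ (n : ℕ) (k : ℤ), (g n k) ^ 2 ≤ g (2 * n) 0) :
    limsup (fun n : ℕ => (∑ᶠ k : ℤ, g n k) ^ (1 / (n : ℝ))) atTop
      = limsup (fun n : ℕ => (g n 0) ^ (1 / (n : ℝ))) atTop := by
  set u : ℕ → ℝ := fun n : ℕ => (∑ᶠ k : ℤ, g n k) ^ (1 / (n : ℝ)) with hu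
  set v : ℕ → ℝ := fun n : ℕ => (g n 0) ^ (1 / (n : ℝ)) with hv
  -- the finsum as a finite sum
  have hFsum : ∀ n : ℕ, (∑ᶠ k : ℤ, g n k) = ∑ k ∈ Finset.Icc (-(n:ℤ)) n, g n k := by
    intro n
    refine finsum_eq_sum_of_support_subset _ ?_
    intro k hk
    simp only [Function.mem_support] at hk
    have hkn : |k| ≤ (n : ℤ) := le_of_not_gt fun h => hk (hsupp n k h)
    rcases abs_le.mp hkn with ⟨h1, h2⟩
    simp only [Finset.coe_Icc, Set.mem_Icc]
    exact ⟨h1, h2⟩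
  have hF0 : ∀ n : ℕ, 0 ≤ ∑ᶠ k : ℤ, g n k := by
    intro n; rw [hFsum]; exact Finset.sum_nonneg fun k _ => hpos n k
  have hAF : ∀ n : ℕ, g n 0 ≤ ∑ᶠ k : ℤ, g n k := by
    intro n; rw [hFsum]
    exact Finset.single_le_sum (fun k _ => hpos n k) (by simp)
  have hcard : ∀ n : ℕ, (Finset.Icc (-(n:ℤ)) n).card = 2 * n + 1 := by
    intro n; rw [Int.card_Icc]; omega
  have hFle : ∀ n : ℕ, (∑ᶠ k : ℤ, g n k) ≤ (2 * n + 1 : ℝ) * Real.sqrt (g (2 * n) 0) := by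
    intro n
    rw [hFsum]
    calc ∑ k ∈ Finset.Icc (-(n:ℤ)) n, g n k
        ≤ ∑ _k ∈ Finset.Icc (-(n:ℤ)) n, Real.sqrt (g (2 * n) 0) :=
          Finset.sum_le_sum fun k _ =>
            (Real.le_sqrt (hpos n k) (hpos (2 * n) 0)).mpr (hsq n k)
      _ = (2 * n + 1 : ℝ) * Real.sqrt (g (2 * n) 0) := by
          rw [Finset.sum_const, hcard, nsmul_eq_mul]; push_cast; ring
  have hu0 : ∀ n, 0 ≤ u n := fun n => Real.rpow_nonneg (hF0 n) _
  have hv0 : ∀ n, 0 ≤ v n := fun n => Real.rpow_nonneg (hpos n 0) _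
  have hvu : ∀ n, v n ≤ u n := fun n =>
    Real.rpow_le_rpow (hpos n 0) (hAF n) (by positivity)
  -- key eventual bound
  have key : ∀ a : ℝ, 0 ≤ a → (∀ᶠ m in atTop, v m ≤ a) →
      ∀ᶠ n in atTop, u n ≤ (2 * (n : ℝ) + 1) ^ (1 / (n : ℝ)) * a := by
    intro a ha hev
    obtain ⟨N, hN⟩ := eventually_atTop.mp hev
    filter_upwards [eventually_ge_atTop N, eventually_ge_atTop 1] with n hnN hn1
    have h2n : v (2 * n) ≤ a := hN (2 * n) (by omega)
    have h2n0 : (2 * n : ℕ) ≠ 0 := by omega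
    have hg2n : g (2 * n) 0 ≤ a ^ (2 * n) := by
      have := pow_le_pow_left₀ (Real.rpow_nonneg (hpos (2 * n) 0) _) h2n (2 * n)
      rwa [one_div, Real.rpow_inv_natCast_pow (hpos (2 * n) 0) h2n0] at this
    have hsqrt : Real.sqrt (g (2 * n) 0) ≤ a ^ n := by
      calc Real.sqrt (g (2 * n) 0) ≤ Real.sqrt (a ^ (2 * n)) :=
            Real.sqrt_le_sqrt hg2n
        _ = a ^ n := by
            rw [show a ^ (2 * n) = (a ^ n) ^ 2 by rw [← pow_mul, mul_comm]]
            exact Real.sqrt_sq (by positivity)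
    have hFn : (∑ᶠ k : ℤ, g n k) ≤ (2 * (n : ℝ) + 1) * a ^ n :=
      (hFle n).trans (by
        have := mul_le_mul_of_nonneg_left hsqrt (by positivity : (0:ℝ) ≤ (2 * n + 1 : ℝ))
        push_cast at this ⊢
        linarith)
    have hn0 : n ≠ 0 := by omega
    calc u n ≤ ((2 * (n : ℝ) + 1) * a ^ n) ^ (1 / (n : ℝ)) :=
          Real.rpow_le_rpow (hF0 n) hFn (by positivity)
      _ = (2 * (n : ℝ) + 1) ^ (1 / (n : ℝ)) * (a ^ n) ^ (1 / (n : ℝ)) :=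
          Real.mul_rpow (by positivity) (by positivity)
      _ = (2 * (n : ℝ) + 1) ^ (1 / (n : ℝ)) * a := by
          rw [one_div, Real.pow_rpow_inv_natCast ha hn0]
  have hcu : IsCoboundedUnder (· ≤ ·) atTop u :=
    isCoboundedUnder_le_of_le atTop fun n => hu0 n
  by_cases hb : IsBoundedUnder (· ≤ ·) atTop v
  · obtain ⟨a, haev⟩ := hb
    rw [eventually_map] at haev
    have ha0 : ∀ {b : ℝ}, (∀ᶠ n in atTop, v n ≤ b) → 0 ≤ b := by
      intro b hbe
      obtain ⟨n, hn⟩ := hbe.exists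
      exact (hv0 n).trans hn
    -- u is bounded above
    have hbu : IsBoundedUnder (· ≤ ·) atTop u := by
      refine ⟨2 * (a + 1), ?_⟩
      rw [eventually_map]
      have hev2 : ∀ᶠ n : ℕ in atTop, (2 * (n : ℝ) + 1) ^ (1 / (n : ℝ)) ≤ 2 :=
        aux_tendsto_rpow.eventually_le_const (by norm_num)
      filter_upwards [key (a + 1) (by linarith [ha0 haev])
        (haev.mono fun n hn => by linarith), hev2] with n h1 h2
      calc u n ≤ (2 * (n : ℝ) + 1) ^ (1 / (n : ℝ)) * (a + 1) := h1
        _ ≤ 2 * (a + 1) :=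
            mul_le_mul_of_nonneg_right h2 (by linarith [ha0 haev])
    have h1 : limsup v atTop ≤ limsup u atTop :=
      limsup_le_limsup (Eventually.of_forall hvu)
        (isCoboundedUnder_le_of_le atTop fun n => hv0 n) hbu
    have h2 : limsup u atTop ≤ limsup v atTop := by
      rw [limsup_eq]
      refine le_csInf ⟨a, haev⟩ ?_
      rintro b hbe
      have hb0 : 0 ≤ b := ha0 hbe
      refine le_of_forall_pos_le_add fun ε hε => ?_
      have hδ : (0:ℝ) < ε / (b + 1) := by positivity
      have hev2 : ∀ᶠ n : ℕ in atTop,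
          (2 * (n : ℝ) + 1) ^ (1 / (n : ℝ)) ≤ 1 + ε / (b + 1) :=
        aux_tendsto_rpow.eventually_le_const (by linarith)
      refine limsup_le_of_le hcu ?_
      filter_upwards [key b hb0 hbe, hev2] with n hk h2n
      have h1n : (0:ℝ) ≤ (2 * (n : ℝ) + 1) ^ (1 / (n : ℝ)) := by positivity
      calc u n ≤ (2 * (n : ℝ) + 1) ^ (1 / (n : ℝ)) * b := hk
        _ ≤ (1 + ε / (b + 1)) * b := mul_le_mul_of_nonneg_right h2n hb0
        _ = b + (ε / (b + 1)) * b := by ring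
        _ ≤ b + ε := by
            have : (ε / (b + 1)) * b ≤ (ε / (b + 1)) * (b + 1) := by
              apply mul_le_mul_of_nonneg_left (by linarith) (le_of_lt hδ)
            have heq : (ε / (b + 1)) * (b + 1) = ε := by field_simp
            linarith
    linarith
  · have hbu : ¬ IsBoundedUnder (· ≤ ·) atTop u := by
      intro ⟨b, hbb⟩
      rw [eventually_map] at hbb
      exact hb ⟨b, by rw [eventually_map]; exact hbb.mono fun n hn => (hvu n).trans hn⟩
    rw [aux_limsup_unbounded hbu, aux_limsup_unbounded hb]
end

section
/- In BS(N,N) = ⟨a,b | a^N b = b a^N⟩ with N ≥ 2, the subgroup generated by x = ab and y = ab^{-1} is a free group of rank 2. -/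
/-- Letters: `(0, true) = a`, `(0, false) = a⁻¹`, `(1, true) = b`, `(1, false) = b⁻¹`. -/
abbrev Letter := Fin 2 × Bool

/-- The single relator `a^N b a^{-M} b^{-1}` of the Baumslag–Solitar group. -/
def BSrel (N M : ℕ) : Set (FreeGroup (Fin 2)) :=
  {FreeGroup.of 0 ^ N * FreeGroup.of 1 * (FreeGroup.of 0 ^ M)⁻¹ * (FreeGroup.of 1)⁻¹}

/-- The Baumslag–Solitar group `BS(N,M) = ⟨a, b ∣ aᴺ b = b aᴹ⟩`. -/
abbrev BS (N M : ℕ) := PresentedGroup (BSrel N M)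

/-- The generator `a` of `BS(N,M)`. -/
def bsA (N M : ℕ) : BS N M := PresentedGroup.of 0

/-- The generator `b` of `BS(N,M)`. -/
def bsB (N M : ℕ) : BS N M := PresentedGroup.of 1

/-- Evaluate a word over `{a^{±1}, b^{±1}}` in `BS(N,M)`. -/
def evalWord (N M : ℕ) (w : List Letter) : BS N M :=
  (w.map fun s => if s.2 then PresentedGroup.of s.1 else (PresentedGroup.of s.1)⁻¹).prod

/-- `g_{n,k}`: the number of words of length `n` equal to `aᵏ` in `BS(N,M)`. -/
noncomputable def gCount (N M : ℕ) (n : ℕ) (k : ℤ) : ℕ :=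
  Nat.card {w : List Letter // w.length = n ∧ evalWord N M w = bsA N M ^ k}


namespace BSfree
variable {N : ℕ}

/-- Reduced alternating words over `ZMod N ⊕ ℤ`. -/
def Good : List (ZMod N ⊕ ℤ) → Prop
  | [] => True
  | [x] => x ≠ Sum.inl 0 ∧ x ≠ Sum.inr 0
  | x :: y :: t => (x ≠ Sum.inl 0 ∧ x ≠ Sum.inr 0) ∧ x.isLeft ≠ y.isLeft ∧ Good (y :: t)

lemma good_nil : Good ([] : List (ZMod N ⊕ ℤ)) := trivial

lemma good_inl_cases {j : ZMod N} {t : List (ZMod N ⊕ ℤ)} (h : Good (Sum.inl j :: t)) :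
    j ≠ 0 ∧ Good t ∧ (t = [] ∨ ∃ k s, t = Sum.inr k :: s) := by
  match t with
  | [] => refine ⟨fun hj => ?_, trivial, Or.inl rfl⟩; simp [Good, hj] at h
  | Sum.inl k :: s => simp [Good] at h
  | Sum.inr k :: s =>
    refine ⟨fun hj => ?_, h.2.2, Or.inr ⟨k, s, rfl⟩⟩
    simp [Good, hj] at h

lemma good_inr_cases {k : ℤ} {t : List (ZMod N ⊕ ℤ)} (h : Good (Sum.inr k :: t)) :
    k ≠ 0 ∧ Good t ∧ (t = [] ∨ ∃ j s, t = Sum.inl j :: s) := by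
  match t with
  | [] => refine ⟨fun hk => ?_, trivial, Or.inl rfl⟩; simp [Good, hk] at h
  | Sum.inr j :: s => simp [Good] at h
  | Sum.inl j :: s =>
    refine ⟨fun hk => ?_, h.2.2, Or.inr ⟨j, s, rfl⟩⟩
    simp [Good, hk] at h

lemma good_cons_inl {j : ZMod N} {t : List (ZMod N ⊕ ℤ)} (hj : j ≠ 0) (ht : Good t)
    (hsh : t = [] ∨ ∃ k s, t = Sum.inr k :: s) : Good (Sum.inl j :: t) := by
  rcases hsh with rfl | ⟨k, s, rfl⟩
  · exact ⟨by simpa using hj, by simp⟩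
  · exact ⟨⟨by simpa using hj, by simp⟩, by simp, ht⟩

lemma good_cons_inr {k : ℤ} {t : List (ZMod N ⊕ ℤ)} (hk : k ≠ 0) (ht : Good t)
    (hsh : t = [] ∨ ∃ j s, t = Sum.inl j :: s) : Good (Sum.inr k :: t) := by
  rcases hsh with rfl | ⟨j, s, rfl⟩
  · exact ⟨by simp, by simpa using hk⟩
  · exact ⟨⟨by simp, by simpa using hk⟩, by simp, ht⟩

/-- Left multiplication by `a^c` on reduced words. -/
def addL (c : ZMod N) (l : List (ZMod N ⊕ ℤ)) : List (ZMod N ⊕ ℤ) :=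
  if c = 0 then l else
    match l with
    | Sum.inl j :: t => if j + c = 0 then t else Sum.inl (j + c) :: t
    | _ => Sum.inl c :: l

/-- Left multiplication by `b^c` on reduced words. -/
def addR (c : ℤ) (l : List (ZMod N ⊕ ℤ)) : List (ZMod N ⊕ ℤ) :=
  if c = 0 then l else
    match l with
    | Sum.inr k :: t => if k + c = 0 then t else Sum.inr (k + c) :: t
    | _ => Sum.inr c :: l

@[simp] lemma addL_zero (l : List (ZMod N ⊕ ℤ)) : addL 0 l = l := by simp [addL]
@[simp] lemma addR_zero (l : List (ZMod N ⊕ ℤ)) : addR 0 l = l := by simp [addR]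

lemma addL_nil {c : ZMod N} (hc : c ≠ 0) : addL c ([] : List (ZMod N ⊕ ℤ)) = [Sum.inl c] := by
  simp [addL, hc]

lemma addL_inr {c : ZMod N} (hc : c ≠ 0) (k : ℤ) (t : List (ZMod N ⊕ ℤ)) :
    addL c (Sum.inr k :: t) = Sum.inl c :: Sum.inr k :: t := by
  simp [addL, hc]

lemma addL_inl {c j : ZMod N} (hc : c ≠ 0) (t : List (ZMod N ⊕ ℤ)) :
    addL c (Sum.inl j :: t) = if j + c = 0 then t else Sum.inl (j + c) :: t := by
  simp [addL, hc]

lemma addR_nil {c : ℤ} (hc : c ≠ 0) : addR c ([] : List (ZMod N ⊕ ℤ)) = [Sum.inr c] := by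
  simp [addR, hc]

lemma addR_inl {c : ℤ} (hc : c ≠ 0) (j : ZMod N) (t : List (ZMod N ⊕ ℤ)) :
    addR c (Sum.inl j :: t) = Sum.inr c :: Sum.inl j :: t := by
  simp [addR, hc]

lemma addR_inr {c k : ℤ} (hc : c ≠ 0) (t : List (ZMod N ⊕ ℤ)) :
    addR c (Sum.inr k :: t) = if k + c = 0 then t else Sum.inr (k + c) :: t := by
  simp [addR, hc]

lemma good_addL {c : ZMod N} {l : List (ZMod N ⊕ ℤ)} (hl : Good l) : Good (addL c l) := by
  rcases eq_or_ne c 0 with rfl | hc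
  · simpa
  match l with
  | [] => rw [addL_nil hc]; exact good_cons_inl hc good_nil (Or.inl rfl)
  | Sum.inl j :: t =>
    obtain ⟨hj, ht, hsh⟩ := good_inl_cases hl
    rw [addL_inl hc]
    by_cases hjc : j + c = 0
    · simpa [hjc] using ht
    · rw [if_neg hjc]; exact good_cons_inl hjc ht hsh
  | Sum.inr k :: t =>
    rw [addL_inr hc]
    exact good_cons_inl hc hl (Or.inr ⟨k, t, rfl⟩)

lemma good_addR {c : ℤ} {l : List (ZMod N ⊕ ℤ)} (hl : Good l) : Good (addR c l) := by
  rcases eq_or_ne c 0 with rfl | hc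
  · simpa
  match l with
  | [] => rw [addR_nil hc]; exact good_cons_inr hc good_nil (Or.inl rfl)
  | Sum.inr k :: t =>
    obtain ⟨hk, ht, hsh⟩ := good_inr_cases hl
    rw [addR_inr hc]
    by_cases hkc : k + c = 0
    · simpa [hkc] using ht
    · rw [if_neg hkc]; exact good_cons_inr hkc ht hsh
  | Sum.inl j :: t =>
    rw [addR_inl hc]
    exact good_cons_inr hc hl (Or.inr ⟨j, t, rfl⟩)

lemma addL_addL (c d : ZMod N) {l : List (ZMod N ⊕ ℤ)} (hl : Good l) :
    addL c (addL d l) = addL (c + d) l := by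
  rcases eq_or_ne d 0 with rfl | hd
  · simp
  rcases eq_or_ne c 0 with rfl | hc
  · simp
  match l with
  | [] =>
    rw [addL_nil hd, addL_inl hc]
    rcases eq_or_ne (c + d) 0 with h0 | h0
    · rw [if_pos (by rw [add_comm]; exact h0), h0, addL_zero]
    · rw [if_neg (by rw [add_comm]; exact h0), addL_nil h0, add_comm d c]
  | Sum.inr k :: t =>
    rw [addL_inr hd, addL_inl hc]
    rcases eq_or_ne (c + d) 0 with h0 | h0
    · rw [if_pos (by rw [add_comm]; exact h0), h0, addL_zero]
    · rw [if_neg (by rw [add_comm]; exact h0), addL_inr h0, add_comm d c]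
  | Sum.inl j :: t =>
    obtain ⟨hj, ht, hsh⟩ := good_inl_cases hl
    rw [addL_inl hd]
    by_cases hjd : j + d = 0
    · rw [if_pos hjd]
      rcases eq_or_ne (c + d) 0 with h0 | h0
      · have hcj : c = j := by linear_combination h0 - hjd
        rw [h0, addL_zero, hcj]
        rcases hsh with rfl | ⟨k, s, rfl⟩
        · rw [addL_nil hj]
        · rw [addL_inr hj]
      · have hkey : j + (c + d) = c := by linear_combination hjd
        rw [addL_inl h0, hkey, if_neg hc]
        rcases hsh with rfl | ⟨k, s, rfl⟩
        · rw [addL_nil hc]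
        · rw [addL_inr hc]
    · rw [if_neg hjd, addL_inl hc]
      have hkey : j + d + c = j + (c + d) := by ring
      rcases eq_or_ne (c + d) 0 with h0 | h0
      · have h1 : j + d + c = j := by linear_combination h0
        rw [h1, if_neg hj, h0, addL_zero]
      · rw [hkey, addL_inl h0]

lemma addR_addR (c d : ℤ) {l : List (ZMod N ⊕ ℤ)} (hl : Good l) :
    addR c (addR d l) = addR (c + d) l := by
  rcases eq_or_ne d 0 with rfl | hd
  · simp
  rcases eq_or_ne c 0 with rfl | hc
  · simp
  match l with
  | [] =>
    rw [addR_nil hd, addR_inr hc]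
    rcases eq_or_ne (c + d) 0 with h0 | h0
    · rw [if_pos (by rw [add_comm]; exact h0), h0, addR_zero]
    · rw [if_neg (by rw [add_comm]; exact h0), addR_nil h0, add_comm d c]
  | Sum.inl k :: t =>
    rw [addR_inl hd, addR_inr hc]
    rcases eq_or_ne (c + d) 0 with h0 | h0
    · rw [if_pos (by rw [add_comm]; exact h0), h0, addR_zero]
    · rw [if_neg (by rw [add_comm]; exact h0), addR_inl h0, add_comm d c]
  | Sum.inr j :: t =>
    obtain ⟨hj, ht, hsh⟩ := good_inr_cases hl
    rw [addR_inr hd]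
    by_cases hjd : j + d = 0
    · rw [if_pos hjd]
      rcases eq_or_ne (c + d) 0 with h0 | h0
      · have hcj : c = j := by omega
        rw [h0, addR_zero, hcj]
        rcases hsh with rfl | ⟨k, s, rfl⟩
        · rw [addR_nil hj]
        · rw [addR_inl hj]
      · have hkey : j + (c + d) = c := by omega
        rw [addR_inr h0, hkey, if_neg hc]
        rcases hsh with rfl | ⟨k, s, rfl⟩
        · rw [addR_nil hc]
        · rw [addR_inl hc]
    · rw [if_neg hjd, addR_inr hc]
      have hkey : j + d + c = j + (c + d) := by ring
      rcases eq_or_ne (c + d) 0 with h0 | h0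
      · have h1 : j + d + c = j := by omega
        rw [h1, if_neg hj, h0, addR_zero]
      · rw [hkey, addR_inr h0]

/-- The type of reduced words, on which our permutations act. -/
def Wrd (N : ℕ) : Type := {l : List (ZMod N ⊕ ℤ) // Good l}

/-- The permutation of reduced words given by left multiplication by `a^c`. -/
def permL (c : ZMod N) : Equiv.Perm (Wrd N) where
  toFun l := ⟨addL c l.1, good_addL l.2⟩
  invFun l := ⟨addL (-c) l.1, good_addL l.2⟩
  left_inv l := Subtype.ext (by simp [addL_addL _ _ l.2])
  right_inv l := Subtype.ext (by simp [addL_addL _ _ l.2])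

/-- The permutation of reduced words given by left multiplication by `b^c`. -/
def permR (c : ℤ) : Equiv.Perm (Wrd N) where
  toFun l := ⟨addR c l.1, good_addR l.2⟩
  invFun l := ⟨addR (-c) l.1, good_addR l.2⟩
  left_inv l := Subtype.ext (by simp [addR_addR _ _ l.2])
  right_inv l := Subtype.ext (by simp [addR_addR _ _ l.2])

@[simp] lemma permL_apply (c : ZMod N) (l : Wrd N) :
    (permL c l : Wrd N).1 = addL c l.1 := rfl

@[simp] lemma permR_apply (c : ℤ) (l : Wrd N) :
    (permR c l : Wrd N).1 = addR c l.1 := rfl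

@[simp] lemma permL_inv (c : ZMod N) : (permL c)⁻¹ = permL (-c) := by
  ext l
  rfl

@[simp] lemma permR_inv (c : ℤ) : (permR c : Equiv.Perm (Wrd N))⁻¹ = permR (-c) := by
  ext l
  rfl

lemma permL_mul (c d : ZMod N) : permL c * permL d = permL (c + d) := by
  ext l
  rw [Equiv.Perm.mul_apply]
  exact Subtype.ext (addL_addL c d l.2)

@[simp] lemma permL_zero : (permL (0 : ZMod N)) = 1 := by
  ext l
  exact Subtype.ext (addL_zero l.1)

lemma permL_pow (n : ℕ) : (permL (1 : ZMod N)) ^ n = permL (n : ZMod N) := by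
  induction n with
  | zero => simp
  | succ n ih =>
    rw [pow_succ, ih, permL_mul]
    push_cast
    rfl

lemma permL_one_pow_N : (permL (1 : ZMod N)) ^ N = 1 := by
  rw [permL_pow, ZMod.natCast_self, permL_zero]


/-- Ping-pong set `X i`: words starting `a^j b^k …` with `k > 0` (resp. `k < 0`). -/
def PX (N : ℕ) (i : Fin 2) : Set (Wrd N) :=
  {l | ∃ j k rest, l.1 = Sum.inl j :: Sum.inr k :: rest ∧ (if i = 0 then 0 < k else k < 0)}

/-- Ping-pong set `Y i`: words starting `b^k …` with `k < 0` (resp. `k > 0`). -/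
def PY (N : ℕ) (i : Fin 2) : Set (Wrd N) :=
  {l | ∃ k rest, l.1 = Sum.inr k :: rest ∧ (if i = 0 then k < 0 else 0 < k)}

section PingPong

lemma smul_fst (σ τ : Equiv.Perm (Wrd N)) (l : Wrd N) :
    ((σ * τ) • l).1 = (σ (τ l)).1 := rfl

lemma mem_PX0 {l : Wrd N} :
    l ∈ PX N 0 ↔ ∃ j k rest, l.1 = Sum.inl j :: Sum.inr k :: rest ∧ 0 < k := by
  simp [PX, Set.mem_setOf_eq]

lemma mem_PX1 {l : Wrd N} :
    l ∈ PX N 1 ↔ ∃ j k rest, l.1 = Sum.inl j :: Sum.inr k :: rest ∧ k < 0 := by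
  simp [PX, Set.mem_setOf_eq]

lemma mem_PY0 {l : Wrd N} :
    l ∈ PY N 0 ↔ ∃ k rest, l.1 = Sum.inr k :: rest ∧ k < 0 := by
  simp [PY, Set.mem_setOf_eq]

lemma mem_PY1 {l : Wrd N} :
    l ∈ PY N 1 ↔ ∃ k rest, l.1 = Sum.inr k :: rest ∧ 0 < k := by
  simp [PY, Set.mem_setOf_eq]

lemma mem_u (hone : (1 : ZMod N) ≠ 0) (l : Wrd N) (hl : l ∉ PY N 0) :
    (permL 1 * permR 1 : Equiv.Perm (Wrd N)) • l ∈ PX N 0 := by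
  have hl' : ¬ ∃ k rest, l.1 = Sum.inr k :: rest ∧ k < 0 := by
    simpa [mem_PY0] using hl
  have h1 : ((permL 1 * permR 1 : Equiv.Perm (Wrd N)) • l).1 = addL 1 (addR 1 l.1) := rfl
  rw [mem_PX0, h1]
  match hm : l.1 with
  | [] =>
    rw [addR_nil one_ne_zero, addL_inr hone]
    exact ⟨1, 1, [], rfl, one_pos⟩
  | Sum.inl j :: t =>
    rw [addR_inl one_ne_zero, addL_inr hone]
    exact ⟨1, 1, _, rfl, one_pos⟩
  | Sum.inr k :: t =>
    obtain ⟨hk, -, -⟩ := good_inr_cases (hm ▸ l.2)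
    have hkpos : 0 < k := by
      rcases lt_or_gt_of_ne hk with h | h
      · exact absurd ⟨k, t, hm, h⟩ hl'
      · exact h
    have hne : ¬ k + 1 = 0 := by omega
    rw [addR_inr one_ne_zero, if_neg hne, addL_inr hone]
    refine ⟨1, k + 1, t, rfl, ?_⟩
    omega

lemma mem_uinv (hone : (1 : ZMod N) ≠ 0) (l : Wrd N) (hl : l ∉ PX N 0) :
    (permL 1 * permR 1 : Equiv.Perm (Wrd N))⁻¹ • l ∈ PY N 0 := by
  have hnone : (-1 : ZMod N) ≠ 0 := neg_ne_zero.2 hone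
  have hl' : ¬ ∃ j k rest, l.1 = Sum.inl j :: Sum.inr k :: rest ∧ 0 < k := by
    simpa [mem_PX0] using hl
  have h1 : ((permL 1 * permR 1 : Equiv.Perm (Wrd N))⁻¹ • l).1 = addR (-1) (addL (-1) l.1) := by
    rw [mul_inv_rev, permL_inv, permR_inv]
    rfl
  rw [mem_PY0, h1]
  match hm : l.1 with
  | [] =>
    rw [addL_nil hnone, addR_inl (by norm_num)]
    refine ⟨-1, _, rfl, ?_⟩
    omega
  | Sum.inr k :: t =>
    rw [addL_inr hnone, addR_inl (by norm_num)]
    refine ⟨-1, _, rfl, ?_⟩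
    omega
  | Sum.inl j :: t =>
    obtain ⟨hj, ht, hsh⟩ := good_inl_cases (hm ▸ l.2)
    rw [addL_inl hnone]
    by_cases hj1 : j + -1 = 0
    · rw [if_pos hj1]
      rcases hsh with rfl | ⟨k, s, rfl⟩
      · rw [addR_nil (by norm_num)]
        refine ⟨-1, [], rfl, ?_⟩
        omega
      · obtain ⟨hk, -, -⟩ := good_inr_cases ht
        have hkneg : k < 0 := by
          rcases lt_or_gt_of_ne hk with h | h
          · exact h
          · exact absurd ⟨j, k, s, hm, h⟩ hl'
        have hne : ¬ k + -1 = 0 := by omega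
        rw [addR_inr (by norm_num), if_neg hne]
        refine ⟨k + -1, s, rfl, ?_⟩
        omega
    · rw [if_neg hj1, addR_inl (by norm_num)]
      refine ⟨-1, _, rfl, ?_⟩
      omega

lemma mem_v (hone : (1 : ZMod N) ≠ 0) (l : Wrd N) (hl : l ∉ PY N 1) :
    (permL 1 * (permR 1)⁻¹ : Equiv.Perm (Wrd N)) • l ∈ PX N 1 := by
  have hl' : ¬ ∃ k rest, l.1 = Sum.inr k :: rest ∧ 0 < k := by
    simpa [mem_PY1] using hl
  have h1 : ((permL 1 * (permR 1)⁻¹ : Equiv.Perm (Wrd N)) • l).1 = addL 1 (addR (-1) l.1) := by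
    rw [permR_inv]
    rfl
  rw [mem_PX1, h1]
  match hm : l.1 with
  | [] =>
    rw [addR_nil (by norm_num), addL_inr hone]
    refine ⟨1, -1, [], rfl, ?_⟩
    omega
  | Sum.inl j :: t =>
    rw [addR_inl (by norm_num), addL_inr hone]
    refine ⟨1, -1, _, rfl, ?_⟩
    omega
  | Sum.inr k :: t =>
    obtain ⟨hk, -, -⟩ := good_inr_cases (hm ▸ l.2)
    have hkneg : k < 0 := by
      rcases lt_or_gt_of_ne hk with h | h
      · exact h
      · exact absurd ⟨k, t, hm, h⟩ hl'
    have hne : ¬ k + -1 = 0 := by omega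
    rw [addR_inr (by norm_num), if_neg hne, addL_inr hone]
    refine ⟨1, k + -1, t, rfl, ?_⟩
    omega

lemma mem_vinv (hone : (1 : ZMod N) ≠ 0) (l : Wrd N) (hl : l ∉ PX N 1) :
    (permL 1 * (permR 1)⁻¹ : Equiv.Perm (Wrd N))⁻¹ • l ∈ PY N 1 := by
  have hnone : (-1 : ZMod N) ≠ 0 := neg_ne_zero.2 hone
  have hl' : ¬ ∃ j k rest, l.1 = Sum.inl j :: Sum.inr k :: rest ∧ k < 0 := by
    simpa [mem_PX1] using hl
  have h1 : ((permL 1 * (permR 1)⁻¹ : Equiv.Perm (Wrd N))⁻¹ • l).1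
      = addR 1 (addL (-1) l.1) := by
    rw [mul_inv_rev, permL_inv, inv_inv]
    rfl
  rw [mem_PY1, h1]
  match hm : l.1 with
  | [] =>
    rw [addL_nil hnone, addR_inl one_ne_zero]
    exact ⟨1, _, rfl, one_pos⟩
  | Sum.inr k :: t =>
    rw [addL_inr hnone, addR_inl one_ne_zero]
    exact ⟨1, _, rfl, one_pos⟩
  | Sum.inl j :: t =>
    obtain ⟨hj, ht, hsh⟩ := good_inl_cases (hm ▸ l.2)
    rw [addL_inl hnone]
    by_cases hj1 : j + -1 = 0
    · rw [if_pos hj1]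
      rcases hsh with rfl | ⟨k, s, rfl⟩
      · rw [addR_nil one_ne_zero]
        exact ⟨1, [], rfl, one_pos⟩
      · obtain ⟨hk, -, -⟩ := good_inr_cases ht
        have hkpos : 0 < k := by
          rcases lt_or_gt_of_ne hk with h | h
          · exact absurd ⟨j, k, s, hm, h⟩ hl'
          · exact h
        have hne : ¬ k + 1 = 0 := by omega
        rw [addR_inr one_ne_zero, if_neg hne]
        refine ⟨k + 1, s, rfl, ?_⟩
        omega
    · rw [if_neg hj1, addR_inl one_ne_zero]
      exact ⟨1, _, rfl, one_pos⟩

lemma PX_disj : Pairwise (Function.onFun Disjoint (PX N)) := by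
  have h01 : Disjoint (PX N 0) (PX N 1) := by
    rw [Set.disjoint_left]
    intro l h0 h1
    rw [mem_PX0] at h0
    rw [mem_PX1] at h1
    obtain ⟨j, k, rest, hm, hk⟩ := h0
    obtain ⟨j', k', rest', hm', hk'⟩ := h1
    rw [hm] at hm'
    simp only [List.cons.injEq, Sum.inl.injEq, Sum.inr.injEq] at hm'
    omega
  intro i j hij
  fin_cases i <;> fin_cases j <;>
    first
      | exact absurd rfl hij
      | exact h01
      | exact h01.symm

lemma PY_disj : Pairwise (Function.onFun Disjoint (PY N)) := by
  have h01 : Disjoint (PY N 0) (PY N 1) := by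
    rw [Set.disjoint_left]
    intro l h0 h1
    rw [mem_PY0] at h0
    rw [mem_PY1] at h1
    obtain ⟨k, rest, hm, hk⟩ := h0
    obtain ⟨k', rest', hm', hk'⟩ := h1
    rw [hm] at hm'
    simp only [List.cons.injEq, Sum.inr.injEq] at hm'
    omega
  intro i j hij
  fin_cases i <;> fin_cases j <;>
    first
      | exact absurd rfl hij
      | exact h01
      | exact h01.symm

lemma PXY_disj (i j : Fin 2) : Disjoint (PX N i) (PY N j) := by
  rw [Set.disjoint_left]
  intro l hx hy
  obtain ⟨j', k, rest, h1, -⟩ := hx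
  obtain ⟨k', rest', h2, -⟩ := hy
  rw [h1] at h2
  simp at h2

lemma PX_nonempty (hone : (1 : ZMod N) ≠ 0) (i : Fin 2) : (PX N i).Nonempty := by
  fin_cases i <;> simp only [Fin.zero_eta, Fin.mk_one]
  · refine ⟨⟨[Sum.inl 1, Sum.inr 1], ?_⟩, ?_⟩
    · exact good_cons_inl hone (good_cons_inr one_ne_zero good_nil (Or.inl rfl))
        (Or.inr ⟨1, [], rfl⟩)
    · apply mem_PX0.2
      exact ⟨1, 1, [], rfl, one_pos⟩
  · refine ⟨⟨[Sum.inl 1, Sum.inr (-1)], ?_⟩, ?_⟩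
    · exact good_cons_inl hone (good_cons_inr (by norm_num) good_nil (Or.inl rfl))
        (Or.inr ⟨-1, [], rfl⟩)
    · apply mem_PX1.2
      refine ⟨1, -1, [], rfl, ?_⟩
      omega

end PingPong

end BSfree


/-- In `BS(N,N)` with `N ≥ 2`, the subgroup generated by `x = ab` and `y = ab⁻¹` is
free of rank 2: the homomorphism from the free group of rank 2 sending the two
generators to `x` and `y` is injective. -/
theorem bsNN_free_subgroup (N : ℕ) (hN : 2 ≤ N) :
    Function.Injective (FreeGroup.lift (fun i : Fin 2 =>
      if i = 0 then bsA N N * bsB N N else bsA N N * (bsB N N)⁻¹) :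
        FreeGroup (Fin 2) →* BS N N) := by
  classical
  haveI : Fact (1 < N) := ⟨hN⟩
  have hone : (1 : ZMod N) ≠ 0 := one_ne_zero
  set u : Equiv.Perm (BSfree.Wrd N) := BSfree.permL 1 * BSfree.permR 1 with hu
  set v : Equiv.Perm (BSfree.Wrd N) := BSfree.permL 1 * (BSfree.permR 1)⁻¹ with hv
  have hrel : ∀ r ∈ BSrel N N, FreeGroup.lift
      (fun i : Fin 2 => if i = 0 then BSfree.permL (1 : ZMod N) else BSfree.permR (1 : ℤ)) r
        = 1 := by
    intro r hr
    rw [BSrel, Set.mem_singleton_iff] at hr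
    subst hr
    simp only [map_mul, map_pow, map_inv, FreeGroup.lift_apply_of]
    norm_num
    rw [BSfree.permL_one_pow_N, ← BSfree.permR_inv]
    group
  let φ : BS N N →* Equiv.Perm (BSfree.Wrd N) := PresentedGroup.toGroup hrel
  have hkey : Function.Injective
      (FreeGroup.lift (fun i : Fin 2 => if i = 0 then u else v) :
        FreeGroup (Fin 2) →* Equiv.Perm (BSfree.Wrd N)) := by
    apply FreeGroup.injective_lift_of_ping_pong _ (BSfree.PX N) (BSfree.PY N)
    · exact BSfree.PX_nonempty hone
    · exact BSfree.PX_disj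
    · exact BSfree.PY_disj
    · exact BSfree.PXY_disj
    · intro i
      intro z hz
      rw [Set.mem_smul_set] at hz
      obtain ⟨w, hw, rfl⟩ := hz
      rw [Set.mem_compl_iff] at hw
      fin_cases i
      · simpa [hu] using BSfree.mem_u hone w hw
      · simpa [hv] using BSfree.mem_v hone w hw
    · intro i
      intro z hz
      rw [Set.mem_smul_set] at hz
      obtain ⟨w, hw, rfl⟩ := hz
      rw [Set.mem_compl_iff] at hw
      fin_cases i
      · simpa [hu, Pi.inv_apply] using BSfree.mem_uinv hone w hw
      · simpa [hv, Pi.inv_apply] using BSfree.mem_vinv hone w hw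
  have hcomp : φ.comp (FreeGroup.lift (fun i : Fin 2 =>
      if i = 0 then bsA N N * bsB N N else bsA N N * (bsB N N)⁻¹))
        = FreeGroup.lift (fun i : Fin 2 => if i = 0 then u else v) := by
    have hphi0 : φ (PresentedGroup.of (0 : Fin 2)) = BSfree.permL 1 := by
      show PresentedGroup.toGroup hrel (PresentedGroup.of (0 : Fin 2)) = BSfree.permL 1
      rw [PresentedGroup.toGroup.of, if_pos rfl]
    have hphi1 : φ (PresentedGroup.of (1 : Fin 2)) = BSfree.permR 1 := by
      show PresentedGroup.toGroup hrel (PresentedGroup.of (1 : Fin 2)) = BSfree.permR 1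
      rw [PresentedGroup.toGroup.of, if_neg (by decide : ¬(1 : Fin 2) = 0)]
    refine FreeGroup.ext_hom _ _ fun i => ?_
    rw [MonoidHom.comp_apply, FreeGroup.lift_apply_of, FreeGroup.lift_apply_of]
    by_cases hi : i = 0
    · subst hi
      rw [if_pos rfl, if_pos rfl]
      rw [show bsA N N * bsB N N
          = PresentedGroup.of (0 : Fin 2) * PresentedGroup.of (1 : Fin 2) from rfl]
      rw [map_mul, hphi0, hphi1, hu]
    · rw [if_neg hi, if_neg hi]
      rw [show bsA N N * (bsB N N)⁻¹
          = PresentedGroup.of (0 : Fin 2) * (PresentedGroup.of (1 : Fin 2))⁻¹ from rfl]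
      rw [map_mul, map_inv, hphi0, hphi1, hv]
  have hinj : Function.Injective (⇑φ ∘ ⇑(FreeGroup.lift (fun i : Fin 2 =>
      if i = 0 then bsA N N * bsB N N else bsA N N * (bsB N N)⁻¹))) := by
    rw [← MonoidHom.coe_comp, hcomp]
    exact hkey
  exact hinj.of_comp
end

section
/- The generating function ∑_{n≥0} (C(2n,n))^2 z^{2n} is not algebraic over C(z). -/
/-- The generating function `∑_{n≥0} C(2n,n)² z^{2n}` as a power series over `ℂ`. -/
noncomputable def centralBinomSqSeries : PowerSeries ℂ :=
  PowerSeries.mk fun m => if m % 2 = 0 then ((Nat.choose m (m / 2) : ℂ)) ^ 2 else 0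

namespace CBSq

open PowerSeries

lemma upper (n : ℕ) : (n+1) * (Nat.centralBinom n)^2 ≤ 16^n := by
  induction n with
  | zero => simp [Nat.centralBinom]
  | succ n ih =>
    set k := Nat.centralBinom n with hk
    set K := Nat.centralBinom (n+1) with hK
    have h1 : (n+1) * K = 2*(2*n+1) * k := Nat.succ_mul_centralBinom_succ n
    have h5 : 4*(n+2)*(2*n+1)^2 ≤ 16*(n+1)^3 := by nlinarith
    have h6 : (n+1)^3 * ((n+2)*K^2) ≤ (n+1)^3 * 16^(n+1) := by
      calc (n+1)^3 * ((n+2)*K^2) = (n+2) * ((n+1)*K)^2 * (n+1) := by ring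
      _ = (n+2) * (2*(2*n+1)*k)^2 * (n+1) := by rw [h1]
      _ = (4*(n+2)*(2*n+1)^2) * ((n+1)*k^2) := by ring
      _ ≤ (4*(n+2)*(2*n+1)^2) * 16^n := Nat.mul_le_mul_left _ ih
      _ ≤ (16*(n+1)^3) * 16^n := Nat.mul_le_mul_right _ h5
      _ = (n+1)^3 * 16^(n+1) := by ring
    have := Nat.le_of_mul_le_mul_left h6 (by positivity)
    simpa using this

lemma lower (n : ℕ) (hn : 1 ≤ n) : 16^n ≤ 4*n * (Nat.centralBinom n)^2 := by
  induction n, hn using Nat.le_induction with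
  | base => decide
  | succ n hn ih =>
    set k := Nat.centralBinom n with hk
    set K := Nat.centralBinom (n+1) with hK
    have h1 : (n+1) * K = 2*(2*n+1) * k := Nat.succ_mul_centralBinom_succ n
    have h5 : 4*n*(n+1) ≤ (2*n+1)^2 := by nlinarith
    have h6 : (n+1)^2 * 16^(n+1) ≤ (n+1)^2 * (4*(n+1)*K^2) := by
      calc (n+1)^2 * 16^(n+1) = (n+1)^2 * 16 * 16^n := by ring
      _ ≤ (n+1)^2 * 16 * (4*n*k^2) := Nat.mul_le_mul_left _ ih
      _ = (4*n*(n+1)) * (16 * (n+1) * k^2) := by ring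
      _ ≤ (2*n+1)^2 * (16 * (n+1) * k^2) := Nat.mul_le_mul_right _ h5
      _ = 4*(n+1) * ((2*(2*n+1)*k)^2) := by ring
      _ = 4*(n+1) * ((n+1)*K)^2 := by rw [h1]
      _ = (n+1)^2 * (4*(n+1)*K^2) := by ring
    exact Nat.le_of_mul_le_mul_left h6 (by positivity)


noncomputable def A (n : ℕ) : ℝ := ((2*n).choose n : ℝ)^2

lemma A_nonneg (n : ℕ) : 0 ≤ A n := by unfold A; positivity

lemma A_zero : A 0 = 1 := by simp [A]

lemma A_mul_upper (n : ℕ) : (n+1 : ℝ) * A n ≤ 16^n := by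
  have := upper n
  have h : (((n+1) * (Nat.centralBinom n)^2 : ℕ) : ℝ) ≤ ((16^n : ℕ) : ℝ) := by exact_mod_cast this
  push_cast at h
  simpa [A, Nat.centralBinom] using h

lemma A_le (n : ℕ) : A n ≤ 16^n := by
  have h := A_mul_upper n
  nlinarith [A_nonneg n, (show (0:ℝ) ≤ n by positivity)]

lemma A_mul_lower (n : ℕ) (hn : 1 ≤ n) : (16:ℝ)^n ≤ 4*n * A n := by
  have := lower n hn
  have h : ((16^n : ℕ) : ℝ) ≤ ((4*n * (Nat.centralBinom n)^2 : ℕ) : ℝ) := by exact_mod_cast this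
  push_cast at h
  simpa [A, Nat.centralBinom] using h

noncomputable def freal (x : ℝ) : ℝ := ∑' n : ℕ, A n * x^(2*n)

lemma term_nonneg (x : ℝ) (n : ℕ) : 0 ≤ A n * x^(2*n) := by
  apply mul_nonneg (A_nonneg n); rw [pow_mul]; positivity

lemma summable_freal {x : ℝ} (hx : |x| < 1/4) : Summable (fun n : ℕ => A n * x^(2*n)) := by
  have hg : Summable (fun n : ℕ => (16 * x^2)^n) := by
    apply summable_geometric_of_lt_one (by positivity)
    nlinarith [abs_nonneg x, sq_abs x]
  apply Summable.of_abs
  apply hg.of_nonneg_of_le (fun n => abs_nonneg _)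
  intro n
  have h1 : |A n * x^(2*n)| = A n * (x^2)^n := by
    rw [abs_mul, abs_of_nonneg (A_nonneg n), abs_pow, pow_mul, sq_abs]
  rw [h1, mul_pow]
  exact mul_le_mul_of_nonneg_right (A_le n) (by positivity)

lemma freal_one_le {x : ℝ} (hx : |x| < 1/4) : 1 ≤ freal x := by
  have hs := summable_freal hx
  have := Summable.le_tsum hs 0 (fun j _ => term_nonneg x j)
  simpa [A_zero, freal] using this

lemma freal_pos {x : ℝ} (hx : |x| < 1/4) : 0 < freal x := lt_of_lt_of_le one_pos (freal_one_le hx)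

lemma freal_mono {x y : ℝ} (hx : 0 ≤ x) (hxy : x ≤ y) (hy : y < 1/4) : freal x ≤ freal y := by
  have hax : |x| < 1/4 := by rw [abs_of_nonneg hx]; linarith
  have hay : |y| < 1/4 := by rw [abs_of_nonneg (le_trans hx hxy)]; linarith
  apply Summable.tsum_le_tsum _ (summable_freal hax) (summable_freal hay)
  intro n
  apply mul_le_mul_of_nonneg_left _ (A_nonneg n)
  exact pow_le_pow_left₀ hx hxy _

lemma freal_unbounded (K : ℝ) : ∃ x : ℝ, 0 < x ∧ x < 1/4 ∧ K ≤ freal x := by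
  obtain ⟨N', hN'⟩ := (Real.tendsto_sum_range_one_div_nat_succ_atTop.eventually_ge_atTop (8*K)).exists
  set N : ℕ := max N' 1 with hN
  have hN1 : 1 ≤ N := le_max_right _ _
  have hN1R : (1:ℝ) ≤ N := by exact_mod_cast hN1
  have hHN : 8*K ≤ ∑ i ∈ Finset.range N, (1 / ((i:ℝ)+1) : ℝ) := by
    refine le_trans hN' ?_
    apply Finset.sum_le_sum_of_subset_of_nonneg (Finset.range_subset_range.mpr (le_max_left _ _))
    intro i _ _; positivity
  set y : ℝ := 1 - 1/(4*N) with hy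
  have hfrac : 0 < 1/(4*(N:ℝ)) := by positivity
  have hfrac4 : 1/(4*(N:ℝ)) ≤ 1/4 := by
    apply one_div_le_one_div_of_le (by norm_num)
    linarith
  have hy0 : 0 < y := by rw [hy]; linarith
  have hy1 : y < 1 := by rw [hy]; linarith
  set x : ℝ := y/4 with hx
  have hx0 : 0 < x := by positivity
  have hx4 : x < 1/4 := by rw [hx]; linarith
  refine ⟨x, hx0, hx4, ?_⟩
  have hxabs : |x| < 1/4 := by rw [abs_of_nonneg (le_of_lt hx0)]; exact hx4
  have hbern : (1/2 : ℝ) ≤ y^(2*N) := by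
    have h2 : (-2 : ℝ) ≤ -(1/(4*N)) := by linarith
    have hb := one_add_mul_le_pow h2 (2*N)
    have he : (1 + (-(1/(4*(N:ℝ))))) = y := by rw [hy]; ring
    rw [he] at hb
    refine le_trans ?_ hb
    push_cast
    have hNne : (N:ℝ) ≠ 0 := by linarith
    have : (2*(N:ℝ)) * (-(1/(4*N))) = -(1/2) := by field_simp; ring
    rw [this]; norm_num
  have hterm : ∀ n : ℕ, 1 ≤ n → n ≤ N → (1/8) * (1/((n:ℝ))) ≤ A n * x^(2*n) := by
    intro n h1 h2
    have hnpos : (0:ℝ) < n := by exact_mod_cast h1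
    have hxpow : x^(2*n) = y^(2*n) / 16^n := by
      rw [hx, div_pow]
      congr 1
      rw [pow_mul]; norm_num
    have hy2 : (1/2:ℝ) ≤ y^(2*n) := by
      refine le_trans hbern ?_
      apply pow_le_pow_of_le_one (le_of_lt hy0) (le_of_lt hy1)
      omega
    have hA : (16:ℝ)^n / (4*n) ≤ A n := by
      rw [div_le_iff₀ (by positivity)]
      nlinarith [A_mul_lower n h1]
    have h16 : (0:ℝ) < 16^n := by positivity
    have hge : (1/2)/(16:ℝ)^n ≤ x^(2*n) := by
      rw [hxpow]; gcongr
    calc (1/8) * (1/(n:ℝ)) = (16^n/(4*n)) * ((1/2)/16^n) := by field_simp; ring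
    _ ≤ A n * x^(2*n) := by
        apply mul_le_mul hA hge (by positivity) (A_nonneg n)
  -- now the partial sum bound
  have hsum1 : ∑ n ∈ Finset.range (N+1), A n * x^(2*n) ≤ freal x :=
    Summable.sum_le_tsum _ (fun i _ => term_nonneg x i) (summable_freal hxabs)
  have hsum2 : ∑ i ∈ Finset.range N, (1/8) * (1/((i:ℝ)+1)) ≤ ∑ n ∈ Finset.range (N+1), A n * x^(2*n) := by
    rw [Finset.sum_range_succ']
    have : ∑ i ∈ Finset.range N, (1/8) * (1/((i:ℝ)+1)) ≤ ∑ i ∈ Finset.range N, A (i+1) * x^(2*(i+1)) := by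
      apply Finset.sum_le_sum
      intro i hi
      have := hterm (i+1) (by omega) (by simpa using Finset.mem_range.mp hi)
      push_cast at this ⊢
      exact this
    have h0 : (0:ℝ) ≤ A 0 * x^(2*0) := term_nonneg x 0
    exact le_trans this (le_add_of_nonneg_right h0)
  have hsum3 : K ≤ ∑ i ∈ Finset.range N, (1/8) * (1/((i:ℝ)+1)) := by
    rw [← Finset.mul_sum]
    linarith
  linarith


lemma freal_upper {t : ℝ} (ht0 : 0 < t) (ht4 : t < 1/4) :
    freal (1/4 - t) ≤ 1 - Real.log t := by
  set x : ℝ := 1/4 - t with hxdef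
  clear_value x
  have hx0 : 0 ≤ x := by rw [hxdef]; linarith
  have hx4 : x < 1/4 := by rw [hxdef]; linarith
  have hxabs : |x| < 1/4 := by rw [abs_of_nonneg hx0]; exact hx4
  set w : ℝ := 16 * x^2 with hwdef
  clear_value w
  have hw0 : 0 ≤ w := by rw [hwdef]; positivity
  have hw1 : w < 1 := by rw [hwdef]; nlinarith [mul_nonneg hx0 (le_of_lt (sub_pos.mpr hx4))]
  set R : ℕ → ℝ := fun n => if n = 0 then 1 else w^n/n with hR
  have h1 : HasSum (fun n : ℕ => w^(n+1)/((n:ℝ)+1)) (-Real.log (1-w)) :=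
    Real.hasSum_pow_div_log_of_abs_lt_one (by rw [abs_of_nonneg hw0]; exact hw1)
  have hfun : (fun n : ℕ => R (n+1)) = fun n : ℕ => w^(n+1)/((n:ℝ)+1) := by
    funext n
    simp only [hR, if_neg (Nat.succ_ne_zero n)]
    push_cast
    ring
  have h2 : HasSum R ((-Real.log (1-w)) + ∑ i ∈ Finset.range 1, R i) := by
    rw [← hasSum_nat_add_iff 1, hfun]
    exact h1
  have hR0 : ∑ i ∈ Finset.range 1, R i = 1 := by simp [hR]
  rw [hR0] at h2
  have hterm : ∀ n : ℕ, A n * x^(2*n) ≤ R n := by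
    intro n
    rcases Nat.eq_zero_or_pos n with h | h
    · subst h; simp [hR, A_zero]
    · have hn0 : (0:ℝ) < n := by exact_mod_cast h
      have hA : (n:ℝ) * A n ≤ 16^n := by
        have := A_mul_upper n
        nlinarith [A_nonneg n]
      simp only [hR, if_neg (Nat.pos_iff_ne_zero.mp h)]
      rw [pow_mul, hwdef, mul_pow, le_div_iff₀ hn0]
      calc A n * (x^2)^n * n = (n * A n) * (x^2)^n := by ring
      _ ≤ 16^n * (x^2)^n := by
          apply mul_le_mul_of_nonneg_right hA (by positivity)
      _ = 16^n * (x^2)^n := rfl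
  have hle : freal x ≤ 1 - Real.log (1-w) := by
    have := Summable.tsum_le_tsum hterm (summable_freal hxabs) h2.summable
    rw [h2.tsum_eq] at this
    unfold freal
    linarith
  have hlog : Real.log t ≤ Real.log (1-w) := by
    apply Real.log_le_log ht0
    rw [hwdef, hxdef]
    nlinarith
  linarith


/-- evaluation of a power series as a tsum -/
noncomputable def SS (φ : PowerSeries ℂ) (x : ℂ) : ℂ := ∑' m : ℕ, (coeff m φ) * x ^ m

/-- absolute convergence of the coefficient series at `x` -/
def NS (φ : PowerSeries ℂ) (x : ℂ) : Prop := Summable fun m : ℕ => ‖(coeff m φ) * x ^ m‖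

lemma NS.summable {φ : PowerSeries ℂ} {x : ℂ} (h : NS φ x) :
    Summable fun m : ℕ => (coeff m φ) * x ^ m := Summable.of_norm h

lemma antidiag_key (φ ψ : PowerSeries ℂ) (x : ℂ) (n : ℕ) :
    ∑ kl ∈ Finset.HasAntidiagonal.antidiagonal n, ((coeff kl.1 φ) * x ^ kl.1) * ((coeff kl.2 ψ) * x ^ kl.2)
      = (coeff n (φ * ψ)) * x ^ n := by
  rw [PowerSeries.coeff_mul, Finset.sum_mul]
  apply Finset.sum_congr rfl
  intro kl hkl
  have h := Finset.HasAntidiagonal.mem_antidiagonal.mp hkl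
  rw [← h, pow_add]
  ring

lemma NS.mul {φ ψ : PowerSeries ℂ} {x : ℂ} (hφ : NS φ x) (hψ : NS ψ x) : NS (φ * ψ) x := by
  have h := summable_norm_sum_mul_antidiagonal_of_summable_norm hφ hψ
  exact h.congr (fun n => by rw [antidiag_key])

lemma SS_mul {φ ψ : PowerSeries ℂ} {x : ℂ} (hφ : NS φ x) (hψ : NS ψ x) :
    SS (φ * ψ) x = SS φ x * SS ψ x := by
  unfold SS
  rw [tsum_mul_tsum_eq_tsum_sum_antidiagonal_of_summable_norm hφ hψ]
  exact tsum_congr fun n => (antidiag_key φ ψ x n).symm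

lemma NS_one (x : ℂ) : NS 1 x := by
  apply summable_of_ne_finset_zero (s := {0})
  intro m hm
  have : m ≠ 0 := by simpa using hm
  simp [PowerSeries.coeff_one, this]

lemma SS_one (x : ℂ) : SS 1 x = 1 := by
  unfold SS
  rw [tsum_eq_single 0]
  · simp
  · intro m hm; simp [PowerSeries.coeff_one, hm]

lemma NS.pow {φ : PowerSeries ℂ} {x : ℂ} (hφ : NS φ x) (i : ℕ) : NS (φ ^ i) x := by
  induction i with
  | zero => simpa using NS_one x
  | succ i ih => rw [pow_succ]; exact ih.mul hφ

lemma SS_pow {φ : PowerSeries ℂ} {x : ℂ} (hφ : NS φ x) (i : ℕ) :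
    SS (φ ^ i) x = (SS φ x) ^ i := by
  induction i with
  | zero => simpa using SS_one x
  | succ i ih => rw [pow_succ, SS_mul (hφ.pow i) hφ, ih, pow_succ]

lemma NS_poly (q : Polynomial ℂ) (x : ℂ) : NS (Polynomial.coeToPowerSeries.ringHom q) x := by
  apply summable_of_ne_finset_zero (s := Finset.range (q.natDegree + 1))
  intro m hm
  have h : q.natDegree < m := by simpa using hm
  simp [Polynomial.coeff_eq_zero_of_natDegree_lt h]

lemma SS_poly (q : Polynomial ℂ) (x : ℂ) :
    SS (Polynomial.coeToPowerSeries.ringHom q) x = q.eval x := by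
  unfold SS
  rw [tsum_eq_sum (s := Finset.range (q.natDegree + 1))]
  · rw [Polynomial.eval_eq_sum_range]
    apply Finset.sum_congr rfl
    intro i _
    simp
  · intro m hm
    have h : q.natDegree < m := by simpa using hm
    simp [Polynomial.coeff_eq_zero_of_natDegree_lt h]

lemma SS_zero (x : ℂ) : SS 0 x = 0 := by unfold SS; simp

/-- main bridge: evaluating a polynomial applied to a power series -/
lemma SS_eval₂ (p : Polynomial (Polynomial ℂ)) (G : PowerSeries ℂ) (x : ℂ) (hG : NS G x) :
    SS (Polynomial.eval₂ Polynomial.coeToPowerSeries.ringHom G p) x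
      = ∑ i ∈ Finset.range (p.natDegree + 1), (p.coeff i).eval x * (SS G x) ^ i := by
  rw [Polynomial.eval₂_eq_sum_range]
  have hterm : ∀ i, NS (Polynomial.coeToPowerSeries.ringHom (p.coeff i) * G ^ i) x :=
    fun i => (NS_poly _ x).mul (hG.pow i)
  have hsum : SS (∑ i ∈ Finset.range (p.natDegree + 1),
      Polynomial.coeToPowerSeries.ringHom (p.coeff i) * G ^ i) x
      = ∑ i ∈ Finset.range (p.natDegree + 1),
        SS (Polynomial.coeToPowerSeries.ringHom (p.coeff i) * G ^ i) x := by
    unfold SS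
    rw [← Summable.tsum_finsetSum (fun i _ => (hterm i).summable)]
    apply tsum_congr
    intro m
    rw [map_sum, Finset.sum_mul]
  rw [hsum]
  apply Finset.sum_congr rfl
  intro i _
  rw [SS_mul (NS_poly _ x) (hG.pow i), SS_poly, SS_pow hG]


lemma coeff_G (m : ℕ) : (coeff m) centralBinomSqSeries
    = if m % 2 = 0 then ((Nat.choose m (m / 2) : ℂ)) ^ 2 else 0 := by
  rw [centralBinomSqSeries, PowerSeries.coeff_mk]

lemma coeff_G_even (n : ℕ) : (coeff (2*n)) centralBinomSqSeries = ((A n : ℝ) : ℂ) := by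
  rw [coeff_G, if_pos (Nat.mul_mod_right 2 n), Nat.mul_div_cancel_left n two_pos]
  push_cast [A]
  ring

lemma coeff_G_odd (m : ℕ) (hm : m % 2 ≠ 0) : (coeff m) centralBinomSqSeries = 0 := by
  rw [coeff_G, if_neg hm]

lemma norm_coeff_G (m : ℕ) : ‖(coeff m) centralBinomSqSeries‖ ≤ 4^m := by
  rcases Nat.even_or_odd m with he | ho
  · obtain ⟨n, hn⟩ := he
    have h2 : m = 2*n := by omega
    subst h2
    rw [coeff_G_even, Complex.norm_real, Real.norm_of_nonneg (A_nonneg n)]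
    calc A n ≤ 16^n := A_le n
    _ = 4^(2*n) := by rw [pow_mul]; norm_num
  · obtain ⟨k, hk⟩ := ho
    rw [coeff_G_odd m (by omega)]
    simp

lemma NS_G {x : ℂ} (hx : ‖x‖ < 1/4) : NS centralBinomSqSeries x := by
  unfold NS
  have hg : Summable (fun m : ℕ => (4*‖x‖)^m) := by
    apply summable_geometric_of_lt_one (by positivity)
    linarith
  apply hg.of_nonneg_of_le (fun m => norm_nonneg _)
  intro m
  rw [norm_mul, norm_pow, mul_pow]
  exact mul_le_mul_of_nonneg_right (norm_coeff_G m) (by positivity)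

lemma SS_G_eq (x : ℝ) : SS centralBinomSqSeries (x : ℂ) = ((freal x : ℝ) : ℂ) := by
  unfold SS
  have hinj : Function.Injective (fun n : ℕ => 2*n) := fun a b h => by
    simp only [] at h; omega
  have hsupp : Function.support (fun m : ℕ => (coeff m) centralBinomSqSeries * (x:ℂ)^m)
      ⊆ Set.range (fun n : ℕ => 2*n) := by
    intro m hm
    rcases Nat.even_or_odd m with he | ho
    · obtain ⟨n, hn⟩ := he; exact ⟨n, show 2*n = m by omega⟩
    · exfalso
      apply hm
      obtain ⟨k, hk⟩ := ho
      show (coeff m) centralBinomSqSeries * (x:ℂ)^m = 0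
      rw [coeff_G_odd m (by omega)]
      simp
  rw [← hinj.tsum_eq hsupp]
  rw [freal, Complex.ofReal_tsum]
  apply tsum_congr
  intro n
  show (coeff (2*n)) centralBinomSqSeries * (x:ℂ)^(2*n) = _
  rw [coeff_G_even]
  push_cast
  ring

/-- the central identity: `freal` is a root of `p` -/
lemma key_identity (p : Polynomial (Polynomial ℂ))
    (heq : Polynomial.eval₂ Polynomial.coeToPowerSeries.ringHom centralBinomSqSeries p = 0)
    (x : ℝ) (hx : |x| < 1/4) :
    ∑ i ∈ Finset.range (p.natDegree + 1),
      (p.coeff i).eval (x:ℂ) * (((freal x : ℝ)):ℂ) ^ i = 0 := by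
  have hG : NS centralBinomSqSeries (x:ℂ) := by
    apply NS_G
    rw [Complex.norm_real, Real.norm_eq_abs]
    exact hx
  have h := SS_eval₂ p centralBinomSqSeries (x:ℂ) hG
  rw [heq, SS_zero, SS_G_eq] at h
  exact h.symm


end CBSq

open CBSq Polynomial in
set_option maxHeartbeats 2000000 in
/-- `∑_{n≥0} C(2n,n)² z^{2n}` is not algebraic over `ℂ(z)`: it satisfies no nonzero
polynomial equation with coefficients in `ℂ[z]` (equivalently `ℂ(z)`). -/
theorem centralBinomSq_not_algebraic :
    ¬ ∃ p : Polynomial (Polynomial ℂ), p ≠ 0 ∧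
        Polynomial.eval₂ Polynomial.coeToPowerSeries.ringHom centralBinomSqSeries p = 0 := by
  classical
  rintro ⟨p, hp, heq⟩
  set d := p.natDegree with hd
  set q : ℕ → Polynomial ℂ := fun i => (p.coeff i).comp (C (1/4 : ℂ) - X) with hqdef
  set a : ℕ → ℕ → ℂ := fun i j => (q i).coeff j with hadef
  set D := (Finset.range (d+1)).sup (fun i => (q i).natDegree) with hDdef
  -- composition is invertible
  have hAA : ((C (1/4:ℂ) - X).comp (C (1/4:ℂ) - X)) = (X : Polynomial ℂ) := by
    simp [sub_comp]
  have compeq : ∀ P : Polynomial ℂ, (P.comp (C (1/4:ℂ) - X)).comp (C (1/4:ℂ) - X) = P := by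
    intro P; rw [comp_assoc, hAA, comp_X]
  have qd_ne : q d ≠ 0 := by
    intro h
    have h2 : p.coeff d = 0 := by
      have := compeq (p.coeff d)
      rw [show (p.coeff d).comp (C (1/4:ℂ) - X) = q d from rfl, h, zero_comp] at this
      exact this.symm
    exact (Polynomial.leadingCoeff_ne_zero.mpr hp) h2
  have hqeval : ∀ (i : ℕ) (t : ℂ), (q i).eval t = (p.coeff i).eval (1/4 - t) := by
    intro i t
    rw [hqdef]
    simp [eval_comp]
  -- minimal t-order j0
  set J : Set ℕ := {j | ∃ i, i ∈ Finset.range (d+1) ∧ a i j ≠ 0} with hJdef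
  have hJne : J.Nonempty := by
    have : ∃ j, (q d).coeff j ≠ 0 := by
      by_contra hc
      push_neg at hc
      exact qd_ne (Polynomial.ext fun n => hc n)
    obtain ⟨j, hj⟩ := this
    exact ⟨j, d, Finset.self_mem_range_succ d, hj⟩
  set j0 := sInf J with hj0def
  obtain ⟨iw, hiwmem, hiw⟩ : ∃ i, i ∈ Finset.range (d+1) ∧ a i j0 ≠ 0 := Nat.sInf_mem hJne
  have hlow : ∀ j < j0, ∀ i ∈ Finset.range (d+1), a i j = 0 := by
    intro j hj i hi
    by_contra hc
    exact Nat.notMem_of_lt_sInf hj ⟨i, hi, hc⟩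
  have hj0D : j0 ∈ Finset.range (D+1) := by
    rw [Finset.mem_range]
    have h1 : j0 ≤ (q iw).natDegree := le_natDegree_of_ne_zero hiw
    have h2 : (q iw).natDegree ≤ D := by
      rw [hDdef]; exact Finset.le_sup (f := fun i => (q i).natDegree) hiwmem
    omega
  -- top u-coefficient i1
  set b : ℕ → ℂ := fun i => a i j0 with hbdef
  set Sfin := (Finset.range (d+1)).filter (fun i => b i ≠ 0) with hSdef
  have hSne : Sfin.Nonempty := ⟨iw, Finset.mem_filter.mpr ⟨hiwmem, hiw⟩⟩
  set i1 := Sfin.max' hSne with hi1def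
  have hi1mem : i1 ∈ Sfin := Sfin.max'_mem hSne
  have hi1range : i1 ∈ Finset.range (d+1) := (Finset.mem_filter.mp hi1mem).1
  have hi1le : i1 ≤ d := by have := Finset.mem_range.mp hi1range; omega
  have hbne : b i1 ≠ 0 := (Finset.mem_filter.mp hi1mem).2
  have hhigh : ∀ i ∈ Finset.range (d+1), i1 < i → b i = 0 := by
    intro i hi hlt
    by_contra hc
    exact absurd (Finset.le_max' Sfin i (Finset.mem_filter.mpr ⟨hi, hc⟩)) (by omega)
  set s := d - i1 with hsdef
  -- constants
  set M : ℝ := ∑ j ∈ Finset.range (D+1), ∑ i ∈ Finset.range (d+1), ‖a i j‖ with hMdef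
  set M' : ℝ := ∑ i ∈ Finset.range (d+1), ‖b i‖ with hM'def
  have hM0 : 0 ≤ M := by
    rw [hMdef]; apply Finset.sum_nonneg; intro j _; apply Finset.sum_nonneg; intro i _
    exact norm_nonneg _
  have hM'0 : 0 ≤ M' := by
    rw [hM'def]; apply Finset.sum_nonneg; intro i _; exact norm_nonneg _
  set Bj : ℕ → ℝ → ℂ := fun j u => ∑ i ∈ Finset.range (d+1), a i j * (u:ℂ)^(d-i) with hBjdef
  set ur : ℝ → ℝ := fun t => (freal (1/4 - t))⁻¹ with hurdef
  -- basic facts about ur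
  have hxfact : ∀ t : ℝ, 0 < t → t < 1/4 → |1/4 - t| < 1/4 := by
    intro t h1 h2; rw [abs_of_nonneg (by linarith)]; linarith
  have hur_pos : ∀ t : ℝ, 0 < t → t < 1/4 → 0 < ur t := by
    intro t h1 h2; rw [hurdef]
    exact inv_pos.mpr (freal_pos (hxfact t h1 h2))
  have hur_le_one : ∀ t : ℝ, 0 < t → t < 1/4 → ur t ≤ 1 := by
    intro t h1 h2; rw [hurdef]
    exact inv_le_one_of_one_le₀ (freal_one_le (hxfact t h1 h2))
  clear_value q a D j0 b Sfin i1 s M M' Bj ur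
  -- ESTIMATE 1
  have E1 : ∀ t : ℝ, 0 < t → t < 1/4 → ‖Bj j0 (ur t)‖ ≤ M * t := by
    intro t ht0 ht4
    have hxabs := hxfact t ht0 ht4
    have hfpos := freal_pos hxabs
    have hFne : ((freal (1/4 - t) : ℝ) : ℂ) ≠ 0 := by
      exact_mod_cast ne_of_gt hfpos
    have hureq : ((ur t : ℝ) : ℂ) = (((freal (1/4 - t) : ℝ) : ℂ))⁻¹ := by
      rw [hurdef]; push_cast; ring
    set F : ℂ := ((freal (1/4 - t) : ℝ) : ℂ) with hFdef
    have Hid := key_identity p heq (1/4 - t) hxabs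
    -- H2
    have hrw : ∀ i ∈ Finset.range (d+1), (q i).eval (t:ℂ) * ((ur t : ℝ):ℂ)^(d-i)
        = ((p.coeff i).eval ((1/4 - t : ℝ):ℂ) * F^i) * (F^d)⁻¹ := by
      intro i hi
      have hid : i ≤ d := by have := Finset.mem_range.mp hi; omega
      have h1 : (q i).eval (t:ℂ) = (p.coeff i).eval ((1/4 - t : ℝ):ℂ) := by
        rw [hqeval i]; congr 1; push_cast; ring
      have hkey : F^i * F^(d-i) = F^d := by rw [← pow_add]; congr 1; omega
      have h2 : ((ur t : ℝ):ℂ)^(d-i) = F^i * (F^d)⁻¹ := by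
        rw [hureq, inv_pow, ← hkey, mul_inv, ← mul_assoc,
          mul_inv_cancel₀ (pow_ne_zero i hFne), one_mul]
      rw [h1, h2]
      ring
    have H2 : ∑ i ∈ Finset.range (d+1), (q i).eval (t:ℂ) * ((ur t : ℝ):ℂ)^(d-i) = 0 := by
      rw [Finset.sum_congr rfl hrw, ← Finset.sum_mul, Hid, zero_mul]
    -- expand in powers of t
    have H3 : ∀ i ∈ Finset.range (d+1),
        (q i).eval (t:ℂ) = ∑ j ∈ Finset.range (D+1), a i j * (t:ℂ)^j := by
      intro i hi
      have hlt : (q i).natDegree < D + 1 := Nat.lt_succ_of_le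
        (by rw [hDdef]; exact Finset.le_sup (f := fun i => (q i).natDegree) hi)
      simp only [hadef]
      exact eval_eq_sum_range' hlt _
    have H4 : ∑ j ∈ Finset.range (D+1), (t:ℂ)^j * Bj j (ur t) = 0 := by
      have e1 : ∑ j ∈ Finset.range (D+1), (t:ℂ)^j * Bj j (ur t)
          = ∑ i ∈ Finset.range (d+1),
              (∑ j ∈ Finset.range (D+1), a i j * (t:ℂ)^j) * ((ur t : ℝ):ℂ)^(d-i) := by
        calc ∑ j ∈ Finset.range (D+1), (t:ℂ)^j * Bj j (ur t)
            = ∑ j ∈ Finset.range (D+1), ∑ i ∈ Finset.range (d+1),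
                (t:ℂ)^j * (a i j * ((ur t : ℝ):ℂ)^(d-i)) := by
              apply Finset.sum_congr rfl; intro j _
              rw [hBjdef, Finset.mul_sum]
        _ = ∑ i ∈ Finset.range (d+1), ∑ j ∈ Finset.range (D+1),
                (t:ℂ)^j * (a i j * ((ur t : ℝ):ℂ)^(d-i)) := Finset.sum_comm
        _ = ∑ i ∈ Finset.range (d+1),
              (∑ j ∈ Finset.range (D+1), a i j * (t:ℂ)^j) * ((ur t : ℝ):ℂ)^(d-i) := by
              apply Finset.sum_congr rfl; intro i _
              rw [Finset.sum_mul]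
              apply Finset.sum_congr rfl; intro j _
              ring
      have e2 : ∑ i ∈ Finset.range (d+1),
          (∑ j ∈ Finset.range (D+1), a i j * (t:ℂ)^j) * ((ur t : ℝ):ℂ)^(d-i)
          = ∑ i ∈ Finset.range (d+1), (q i).eval (t:ℂ) * ((ur t : ℝ):ℂ)^(d-i) :=
        Finset.sum_congr rfl (fun i hi => by rw [← H3 i hi])
      rw [e1, e2]
      exact H2
    -- isolate the j0 term
    have hsplit := Finset.add_sum_erase (Finset.range (D+1))
      (fun j => (t:ℂ)^j * Bj j (ur t)) hj0D
    have hiso : (t:ℂ)^j0 * Bj j0 (ur t)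
        = -∑ j ∈ (Finset.range (D+1)).erase j0, (t:ℂ)^j * Bj j (ur t) := by
      have := hsplit.trans H4
      linear_combination this
    have ht1 : t ≤ 1 := by linarith
    have hub : ∀ j ∈ (Finset.range (D+1)).erase j0,
        ‖(t:ℂ)^j * Bj j (ur t)‖ ≤ t^(j0+1) * ∑ i ∈ Finset.range (d+1), ‖a i j‖ := by
      intro j hj
      obtain ⟨hne, hjr⟩ := Finset.mem_erase.mp hj
      rcases lt_or_gt_of_ne hne with hlt | hgt
      · have hz : Bj j (ur t) = 0 := by
          rw [hBjdef]
          apply Finset.sum_eq_zero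
          intro i hi
          rw [hlow j hlt i hi, zero_mul]
        rw [hz, mul_zero, norm_zero]
        apply mul_nonneg (by positivity)
        apply Finset.sum_nonneg; intro i _; exact norm_nonneg _
      · rw [norm_mul, norm_pow, Complex.norm_real, Real.norm_of_nonneg ht0.le]
        apply mul_le_mul
        · exact pow_le_pow_of_le_one ht0.le ht1 (by omega)
        · rw [hBjdef]
          refine le_trans (norm_sum_le _ _) ?_
          apply Finset.sum_le_sum
          intro i hi
          rw [norm_mul, norm_pow, Complex.norm_real,
            Real.norm_of_nonneg (hur_pos t ht0 ht4).le]
          calc ‖a i j‖ * (ur t)^(d-i) ≤ ‖a i j‖ * 1 := by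
                apply mul_le_mul_of_nonneg_left _ (norm_nonneg _)
                exact pow_le_one₀ (hur_pos t ht0 ht4).le (hur_le_one t ht0 ht4)
          _ = ‖a i j‖ := mul_one _
        · exact norm_nonneg _
        · positivity
    have hnorm1 : t^j0 * ‖Bj j0 (ur t)‖ ≤ t^(j0+1) * M := by
      have h1 : ‖(t:ℂ)^j0 * Bj j0 (ur t)‖
          ≤ ∑ j ∈ (Finset.range (D+1)).erase j0, ‖(t:ℂ)^j * Bj j (ur t)‖ := by
        rw [hiso, norm_neg]
        exact norm_sum_le _ _
      have h2 : ∑ j ∈ (Finset.range (D+1)).erase j0, ‖(t:ℂ)^j * Bj j (ur t)‖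
          ≤ ∑ j ∈ (Finset.range (D+1)).erase j0,
              t^(j0+1) * ∑ i ∈ Finset.range (d+1), ‖a i j‖ :=
        Finset.sum_le_sum hub
      have h3 : ∑ j ∈ (Finset.range (D+1)).erase j0,
            t^(j0+1) * ∑ i ∈ Finset.range (d+1), ‖a i j‖ ≤ t^(j0+1) * M := by
        rw [hMdef, ← Finset.mul_sum]
        apply mul_le_mul_of_nonneg_left _ (by positivity)
        apply Finset.sum_le_sum_of_subset_of_nonneg (Finset.erase_subset _ _)
        intro j _ _
        apply Finset.sum_nonneg; intro i _; exact norm_nonneg _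
      have h4 : ‖(t:ℂ)^j0 * Bj j0 (ur t)‖ = t^j0 * ‖Bj j0 (ur t)‖ := by
        rw [norm_mul, norm_pow, Complex.norm_real, Real.norm_of_nonneg ht0.le]
      rw [← h4]
      exact le_trans h1 (le_trans h2 h3)
    have htj0 : (0:ℝ) < t^j0 := by positivity
    have := le_of_mul_le_mul_left (by
      calc t^j0 * ‖Bj j0 (ur t)‖ ≤ t^(j0+1) * M := hnorm1
      _ = t^j0 * (M * t) := by ring) htj0
    exact this
  -- ESTIMATE 2
  have E2 : ∀ t : ℝ, 0 < t → t < 1/4 →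
      ‖b i1‖ * (ur t)^s ≤ ‖Bj j0 (ur t)‖ + (ur t)^s * (ur t * M') := by
    intro t ht0 ht4
    have hu0 := hur_pos t ht0 ht4
    have hu1 := hur_le_one t ht0 ht4
    have hsplit := Finset.add_sum_erase (Finset.range (d+1))
      (fun i => b i * ((ur t : ℝ):ℂ)^(d-i)) hi1range
    have hBeq : Bj j0 (ur t) = ∑ i ∈ Finset.range (d+1), b i * ((ur t : ℝ):ℂ)^(d-i) := by
      simp only [hBjdef, hbdef]
    have hiso : b i1 * ((ur t : ℝ):ℂ)^s
        = Bj j0 (ur t) - ∑ i ∈ (Finset.range (d+1)).erase i1, b i * ((ur t : ℝ):ℂ)^(d-i) := by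
      rw [hBeq, ← hsplit, hsdef]
      ring
    have hub : ∀ i ∈ (Finset.range (d+1)).erase i1,
        ‖b i * ((ur t : ℝ):ℂ)^(d-i)‖ ≤ ‖b i‖ * (ur t)^(s+1) := by
      intro i hi
      obtain ⟨hne, hir⟩ := Finset.mem_erase.mp hi
      rcases lt_or_gt_of_ne hne with hlt | hgt
      · -- i < i1 : exponent d-i ≥ s+1
        rw [norm_mul, norm_pow, Complex.norm_real, Real.norm_of_nonneg hu0.le]
        apply mul_le_mul_of_nonneg_left _ (norm_nonneg _)
        apply pow_le_pow_of_le_one hu0.le hu1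
        omega
      · -- i > i1 : coefficient zero
        rw [hhigh i hir hgt, zero_mul, norm_zero]
        positivity
    have h1 : ‖b i1 * ((ur t : ℝ):ℂ)^s‖ ≤ ‖Bj j0 (ur t)‖
        + ∑ i ∈ (Finset.range (d+1)).erase i1, ‖b i * ((ur t : ℝ):ℂ)^(d-i)‖ := by
      rw [hiso]
      exact le_trans (norm_sub_le _ _) (by
        apply add_le_add le_rfl
        exact norm_sum_le _ _)
    have h2 : ∑ i ∈ (Finset.range (d+1)).erase i1, ‖b i * ((ur t : ℝ):ℂ)^(d-i)‖
        ≤ (ur t)^(s+1) * M' := by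
      refine le_trans (Finset.sum_le_sum hub) ?_
      have hstep : ∑ i ∈ (Finset.range (d+1)).erase i1, ‖b i‖ * (ur t)^(s+1)
          ≤ ∑ i ∈ Finset.range (d+1), ‖b i‖ * (ur t)^(s+1) := by
        apply Finset.sum_le_sum_of_subset_of_nonneg (Finset.erase_subset _ _)
        intro i _ _; positivity
      refine le_trans hstep (le_of_eq ?_)
      rw [hM'def, Finset.mul_sum]
      apply Finset.sum_congr rfl
      intro i _; ring
    have h3 : ‖b i1 * ((ur t : ℝ):ℂ)^s‖ = ‖b i1‖ * (ur t)^s := by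
      rw [norm_mul, norm_pow, Complex.norm_real, Real.norm_of_nonneg hu0.le]
    have h4 : (ur t)^(s+1) * M' = (ur t)^s * (ur t * M') := by ring
    rw [← h3]
    calc ‖b i1 * ((ur t : ℝ):ℂ)^s‖
        ≤ ‖Bj j0 (ur t)‖ + ∑ i ∈ (Finset.range (d+1)).erase i1,
            ‖b i * ((ur t : ℝ):ℂ)^(d-i)‖ := h1
    _ ≤ ‖Bj j0 (ur t)‖ + (ur t)^(s+1) * M' := by linarith
    _ = ‖Bj j0 (ur t)‖ + (ur t)^s * (ur t * M') := by rw [h4]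
  -- choose the range of small t where ur·M' is small
  have hbpos : 0 < ‖b i1‖ := norm_pos_iff.mpr hbne
  obtain ⟨x0, hx00, hx04, hx0K⟩ := freal_unbounded (2*(M'+1)/‖b i1‖)
  set t1 : ℝ := 1/4 - x0 with ht1def
  have ht10 : 0 < t1 := by rw [ht1def]; linarith
  have ht14 : t1 < 1/4 := by rw [ht1def]; linarith
  have ht1x0 : x0 = 1/4 - t1 := by rw [ht1def]; ring
  clear_value t1
  have hKey : ∀ t : ℝ, 0 < t → t ≤ t1 → (‖b i1‖/2) * (ur t)^s ≤ (M+1) * t := by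
    intro t ht0 htle
    have ht4 : t < 1/4 := by linarith
    have hu0 := hur_pos t ht0 ht4
    -- freal (1/4 - t) ≥ 2(M'+1)/‖b i1‖
    have hmono : freal x0 ≤ freal (1/4 - t) := by
      apply freal_mono (le_of_lt hx00) _ (by linarith)
      rw [ht1def] at htle; linarith
    have hfK : 2*(M'+1)/‖b i1‖ ≤ freal (1/4 - t) := le_trans hx0K hmono
    have hfpos := freal_pos (hxfact t ht0 ht4)
    have hurM : ur t * M' ≤ ‖b i1‖/2 := by
      have hKpos : 0 < 2*(M'+1)/‖b i1‖ := by positivity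
      have hinv : ur t ≤ ‖b i1‖/(2*(M'+1)) := by
        simp only [hurdef]
        have h := inv_anti₀ hKpos hfK
        rwa [inv_div] at h
      calc ur t * M' ≤ (‖b i1‖/(2*(M'+1))) * M' := by
            apply mul_le_mul_of_nonneg_right hinv hM'0
      _ ≤ ‖b i1‖/2 := by
            rw [div_mul_eq_mul_div, div_le_div_iff₀ (by positivity) (by norm_num)]
            nlinarith
    have hcomb : ‖b i1‖ * (ur t)^s ≤ M * t + (ur t)^s * (‖b i1‖/2) := by
      calc ‖b i1‖ * (ur t)^s ≤ ‖Bj j0 (ur t)‖ + (ur t)^s * (ur t * M') := E2 t ht0 ht4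
      _ ≤ M * t + (ur t)^s * (‖b i1‖/2) := by
        have h1 := E1 t ht0 ht4
        have h2 : (ur t)^s * (ur t * M') ≤ (ur t)^s * (‖b i1‖/2) :=
          mul_le_mul_of_nonneg_left hurM (by positivity)
        linarith
    nlinarith [pow_nonneg hu0.le s]
  -- contradiction
  rcases Nat.eq_zero_or_pos s with hs0 | hs1
  · -- s = 0
    set t : ℝ := min t1 (‖b i1‖/(8*(M+1))) with htdef
    have ht0 : 0 < t := by
      apply lt_min ht10
      positivity
    have htle : t ≤ t1 := min_le_left _ _
    have h := hKey t ht0 htle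
    rw [hs0, pow_zero, mul_one] at h
    have h2 : (M+1) * t ≤ (M+1) * (‖b i1‖/(8*(M+1))) :=
      mul_le_mul_of_nonneg_left (min_le_right _ _) (by linarith)
    have h3 : (M+1) * (‖b i1‖/(8*(M+1))) = ‖b i1‖/8 := by
      field_simp
    nlinarith
  · -- s ≥ 1
    set C2 : ℝ := 2*(M+1)/‖b i1‖ with hC2def
    have hC2pos : 0 < C2 := by rw [hC2def]; positivity
    have hKey2 : ∀ t : ℝ, 0 < t → t ≤ t1 → 1 ≤ C2 * t * (1 - Real.log t)^s := by
      intro t ht0 htle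
      have ht4 : t < 1/4 := by linarith
      have hu0 := hur_pos t ht0 ht4
      have hfpos := freal_pos (hxfact t ht0 ht4)
      have h := hKey t ht0 htle
      -- (ur)^s ≤ C2 t
      have hurs : (ur t)^s ≤ C2 * t := by
        rw [hC2def]
        rw [div_mul_eq_mul_div, le_div_iff₀ hbpos]
        nlinarith
      -- multiply by freal^s
      have hcancel : (ur t)^s * (freal (1/4 - t))^s = 1 := by
        simp only [hurdef]
        rw [← mul_pow, inv_mul_cancel₀ (ne_of_gt hfpos), one_pow]
      have h5 : 1 ≤ C2 * t * (freal (1/4 - t))^s := by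
        calc (1:ℝ) = (ur t)^s * (freal (1/4 - t))^s := hcancel.symm
        _ ≤ (C2 * t) * (freal (1/4 - t))^s := by
            apply mul_le_mul_of_nonneg_right hurs (by positivity)
      have h6 : (freal (1/4 - t))^s ≤ (1 - Real.log t)^s := by
        apply pow_le_pow_left₀ hfpos.le (freal_upper ht0 ht4)
      calc (1:ℝ) ≤ C2 * t * (freal (1/4 - t))^s := h5
      _ ≤ C2 * t * (1 - Real.log t)^s := by
          apply mul_le_mul_of_nonneg_left h6 (by positivity)
    -- now pick t = exp(1-z) for z large
    have hev1 := (Real.tendsto_exp_div_pow_atTop s).eventually_gt_atTop (C2 * Real.exp 1)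
    have hev2 := Filter.eventually_ge_atTop (max 1 (1 - Real.log t1))
    obtain ⟨z, hz1, hz2⟩ := (hev1.and hev2).exists
    have hzge1 : (1:ℝ) ≤ z := le_trans (le_max_left _ _) hz2
    have hzget1 : 1 - Real.log t1 ≤ z := le_trans (le_max_right _ _) hz2
    set t : ℝ := Real.exp (1 - z) with htdef
    have ht0 : 0 < t := Real.exp_pos _
    have htle : t ≤ t1 := by
      rw [htdef, ← Real.exp_log ht10]
      apply Real.exp_le_exp.mpr
      linarith
    have hlogt : Real.log t = 1 - z := by rw [htdef, Real.log_exp]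
    have h := hKey2 t ht0 htle
    rw [hlogt] at h
    have hz0 : (0:ℝ) < z := by linarith
    have hzs : (0:ℝ) < z^s := by positivity
    -- 1 ≤ C2 * exp(1-z) * z^s
    have h7 : (1:ℝ) ≤ C2 * Real.exp (1-z) * z^s := by
      calc (1:ℝ) ≤ C2 * t * (1 - (1-z))^s := h
      _ = C2 * Real.exp (1-z) * z^s := by rw [htdef]; ring_nf
    have hee : Real.exp (1-z) * Real.exp z = Real.exp 1 := by
      rw [← Real.exp_add]; ring_nf
    have h8 : Real.exp z ≤ C2 * Real.exp 1 * z^s := by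
      calc Real.exp z = 1 * Real.exp z := (one_mul _).symm
      _ ≤ (C2 * Real.exp (1-z) * z^s) * Real.exp z :=
          mul_le_mul_of_nonneg_right h7 (Real.exp_pos z).le
      _ = C2 * (Real.exp (1-z) * Real.exp z) * z^s := by ring
      _ = C2 * Real.exp 1 * z^s := by rw [hee]
    have h9 : Real.exp z / z^s ≤ C2 * Real.exp 1 := by
      rw [div_le_iff₀ hzs]
      linarith
    linarith
end

section
/- In BS(N,N), every word w over {a^{±1},b^{±1}} representing an element of ⟨a⟩ lies in the set L (no prefix of w equals b^{-1} a^j in the group for any j) if and only if w has no factorization w = x b^{-1} y (as strings) with x representing an element of ⟨a^N⟩. -/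
set_option linter.unusedSectionVars false
set_option linter.unusedVariables false

section Auxiliary

open FreeGroup

lemma red_nil_mk_one {α} {X : List (α × Bool)} (h : FreeGroup.Red X []) :
    FreeGroup.mk X = 1 := by
  have : FreeGroup.mk X = FreeGroup.mk ([] : List (α × Bool)) :=
    FreeGroup.Red.exact.2 ⟨[], h, Relation.ReflTransGen.refl⟩
  simpa [FreeGroup.one_eq_mk] using this

lemma red_singleton_split {α} {x : α × Bool} :
    ∀ {P : List (α × Bool)}, FreeGroup.Red P [x] →
      ∃ X Y, P = X ++ x :: Y ∧ FreeGroup.Red X [] ∧ FreeGroup.Red Y [] := by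
  intro P h
  induction h using Relation.ReflTransGen.head_induction_on with
  | refl => exact ⟨[], [], rfl, .refl, .refl⟩
  | head hstep _h ih =>
    obtain ⟨X', Y', hPXY, hX', hY'⟩ := ih
    cases hstep with
    | @not L₁ L₂ p b =>
      rcases List.append_eq_append_iff.1 hPXY with ⟨a, h1, h2⟩ | ⟨c, h1, h2⟩
      · -- X' = L₁ ++ a, L₂ = a ++ x :: Y'
        refine ⟨L₁ ++ (p, b) :: (p, !b) :: a, Y', by simp [h2], ?_, hY'⟩
        exact Relation.ReflTransGen.head (FreeGroup.Red.Step.not) (h1 ▸ hX')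
      · -- L₁ = X' ++ c, x :: Y' = c ++ L₂
        cases c with
        | nil =>
          simp at h1 h2
          refine ⟨L₁ ++ [(p, b), (p, !b)], Y', by simp [← h2], ?_, hY'⟩
          have : FreeGroup.Red.Step (L₁ ++ (p,b) :: (p,!b) :: ([] : List (α × Bool))) (L₁ ++ []) :=
            FreeGroup.Red.Step.not
          simp only [List.append_nil] at this
          exact Relation.ReflTransGen.head (by simpa using this) (h1 ▸ hX')
        | cons hd tl =>
          obtain ⟨hhd, htl⟩ : hd = x ∧ Y' = tl ++ L₂ := by
            have := h2.symm
            simp [List.cons_eq_cons] at this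
            exact ⟨this.1, this.2.symm⟩
          refine ⟨X', tl ++ (p, b) :: (p, !b) :: L₂, by simp [h1, hhd], hX', ?_⟩
          exact Relation.ReflTransGen.head (FreeGroup.Red.Step.not) (htl ▸ hY')

lemma mk_singleton_false {α} (c : α) :
    FreeGroup.mk [(c, false)] = (FreeGroup.of c)⁻¹ := by
  rw [FreeGroup.of, FreeGroup.inv_mk]
  rfl

lemma mk_eq_inv_of_split {α} {P : List (α × Bool)} {c : α}
    (h : FreeGroup.mk P = (FreeGroup.of c)⁻¹) :
    ∃ X Y, P = X ++ (c, false) :: Y ∧ FreeGroup.mk X = 1 := by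
  rw [← mk_singleton_false] at h
  obtain ⟨L', h1, h2⟩ := FreeGroup.Red.exact.1 h
  rw [FreeGroup.Red.singleton_iff] at h2
  subst h2
  obtain ⟨X, Y, rfl, hX, _⟩ := red_singleton_split h1
  exact ⟨X, Y, rfl, red_nil_mk_one hX⟩

end Auxiliary

open FreeGroup SemidirectProduct Multiplicative

namespace BSNN

variable (N : ℕ)

/-- shift automorphism of `FreeGroup (ZMod N)` -/
def sh : MulAut (FreeGroup (ZMod N)) := FreeGroup.freeGroupCongr (Equiv.addRight (1 : ZMod N))

lemma sh_of (c : ZMod N) : sh N (FreeGroup.of c) = FreeGroup.of (c + 1) := by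
  simp [sh]

lemma sh_inv_of (c : ZMod N) : (sh N)⁻¹ (FreeGroup.of c) = FreeGroup.of (c - 1) := by
  have := sh_of N (c - 1)
  simp at this
  rw [← this]
  simp

lemma sh_zpow_of (k : ℤ) (c : ZMod N) :
    ((sh N ^ k) : MulAut (FreeGroup (ZMod N))) (FreeGroup.of c) = FreeGroup.of (c + k) := by
  induction k using Int.induction_on generalizing c with
  | zero => simp
  | succ n ih =>
    rw [zpow_add_one, MulAut.mul_apply, sh_of, ih]
    push_cast
    ring_nf
  | pred n ih =>
    rw [zpow_sub_one, MulAut.mul_apply, sh_inv_of, ih]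
    push_cast
    ring_nf

/-- the ℤ-action on the free group -/
def actZ : Multiplicative ℤ →* MulAut (FreeGroup (ZMod N)) := zpowersHom _ (sh N)

/-- concrete model: `FreeGroup (ZMod N) ⋊ ℤ` -/
abbrev BG := FreeGroup (ZMod N) ⋊[actZ N] Multiplicative ℤ

lemma actZ_of (k : ℤ) (c : ZMod N) :
    actZ N (Multiplicative.ofAdd k) (FreeGroup.of c) = FreeGroup.of (c + k) := by
  simp [actZ, sh_zpow_of]

def fgen : Fin 2 → BG N :=
  ![SemidirectProduct.inr (Multiplicative.ofAdd (1 : ℤ)),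
    SemidirectProduct.inl (FreeGroup.of (0 : ZMod N))]

lemma rel_holds : ∀ r ∈ BSrel N N, FreeGroup.lift (fgen N) r = 1 := by
  intro r hr
  rcases hr with rfl
  have h0 : FreeGroup.lift (fgen N) (FreeGroup.of (0 : Fin 2))
      = (inr (Multiplicative.ofAdd (1:ℤ)) : BG N) := by
    rw [FreeGroup.lift_apply_of]; rfl
  have h1 : FreeGroup.lift (fgen N) (FreeGroup.of (1 : Fin 2))
      = (inl (FreeGroup.of (0 : ZMod N)) : BG N) := by
    rw [FreeGroup.lift_apply_of]; rfl
  rw [_root_.map_mul, _root_.map_mul, _root_.map_mul, _root_.map_inv, _root_.map_inv, _root_.map_pow, h0, h1]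
  have hNp : ((inr (Multiplicative.ofAdd (1:ℤ)) : BG N)) ^ N
      = inr (Multiplicative.ofAdd ((N:ℤ))) := by
    rw [← _root_.map_pow]
    congr 1
    rw [← ofAdd_nsmul]
    norm_num
  rw [hNp]
  have key : (inr (Multiplicative.ofAdd ((N : ℤ))) : BG N) * inl (FreeGroup.of (0 : ZMod N)) *
      (inr (Multiplicative.ofAdd ((N : ℤ))))⁻¹ = inl (FreeGroup.of (0 : ZMod N)) := by
    rw [show ((inr (Multiplicative.ofAdd ((N:ℤ))) : BG N))⁻¹
      = inr ((Multiplicative.ofAdd ((N:ℤ)))⁻¹) from (_root_.map_inv _ _).symm,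
      ← SemidirectProduct.inl_aut]
    congr 1
    rw [actZ_of N (N : ℤ) (0 : ZMod N)]
    norm_num
  rw [mul_assoc _ _ ((inr (Multiplicative.ofAdd ((N:ℤ))) : BG N))⁻¹, ← mul_assoc, key, mul_inv_cancel]

/-- The embedding `BS(N,N) →* FreeGroup (ZMod N) ⋊ ℤ`. -/
def Phi : BS N N →* BG N := PresentedGroup.toGroup (rel_holds N)

lemma Phi_a : Phi N (bsA N N) = inr (Multiplicative.ofAdd (1 : ℤ)) := by
  rw [bsA, Phi, PresentedGroup.toGroup.of]; rfl

lemma Phi_b : Phi N (bsB N N) = inl (FreeGroup.of (0 : ZMod N)) := by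
  rw [bsB, Phi, PresentedGroup.toGroup.of]; rfl

/-- the relator holds in `BS(N,N)` -/
lemma relBS : (bsA N N) ^ N * bsB N N * ((bsA N N) ^ N)⁻¹ * (bsB N N)⁻¹ = 1 := by
  have h : PresentedGroup.mk (BSrel N N)
      (FreeGroup.of 0 ^ N * FreeGroup.of 1 * (FreeGroup.of 0 ^ N)⁻¹ * (FreeGroup.of 1)⁻¹) = 1 := by
    apply (QuotientGroup.eq_one_iff _).2
    exact Subgroup.subset_normalClosure rfl
  rw [_root_.map_mul, _root_.map_mul, _root_.map_mul, _root_.map_inv, _root_.map_inv,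
    _root_.map_pow] at h
  exact h

lemma commANb : Commute ((bsA N N) ^ N) (bsB N N) := by
  have h := relBS N
  have h2 : (bsA N N) ^ N * bsB N N * ((bsA N N) ^ N)⁻¹ = bsB N N := by
    have := congrArg (· * bsB N N) h
    simpa [mul_assoc] using this
  unfold Commute SemiconjBy
  have h3 := congrArg (· * (bsA N N) ^ N) h2
  simpa [mul_assoc] using h3

lemma commZb (m : ℤ) : Commute ((bsA N N) ^ ((N:ℤ) * m)) (bsB N N) := by
  have : ((bsA N N) ^ ((N:ℤ) * m)) = ((bsA N N) ^ N) ^ m := by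
    rw [← zpow_natCast, ← zpow_mul]
  rw [this]
  exact (commANb N).zpow_left m

lemma conj_aj {j j' : ℤ} (h : (N:ℤ) ∣ j - j') :
    (bsA N N) ^ j * bsB N N * (bsA N N) ^ (-j) = (bsA N N) ^ j' * bsB N N * (bsA N N) ^ (-j') := by
  obtain ⟨m, hm⟩ := h
  have hj : j = j' + (N:ℤ) * m := by omega
  subst hj
  have key : (bsA N N) ^ ((N:ℤ)*m) * bsB N N * (bsA N N) ^ (-((N:ℤ)*m)) = bsB N N := by
    rw [(commZb N m).eq]; group
  calc (bsA N N) ^ (j' + (N:ℤ)*m) * bsB N N * (bsA N N) ^ (-(j' + (N:ℤ)*m))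
      = (bsA N N)^j' * ((bsA N N)^((N:ℤ)*m) * bsB N N * (bsA N N)^(-((N:ℤ)*m))) * (bsA N N)^(-j') := by
        group
    _ = (bsA N N)^j' * bsB N N * (bsA N N)^(-j') := by rw [key]

/-- running projection to letters of `FreeGroup (ZMod N)` -/
def projW : ℤ → List Letter → List (ZMod N × Bool)
  | _, [] => []
  | k, (i, e) :: t =>
    if i = 0 then projW (if e then k + 1 else k - 1) t
    else ((k : ZMod N), e) :: projW k t

/-- running exponent sum of `a` -/
def expoW : ℤ → List Letter → ℤ
  | k, [] => k
  | k, (i, e) :: t => if i = 0 then expoW (if e then k + 1 else k - 1) t else expoW k t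

lemma evalWord_cons (M : ℕ) (s : Letter) (t : List Letter) :
    evalWord N M (s :: t)
      = (if s.2 then (PresentedGroup.of s.1 : BS N M) else (PresentedGroup.of s.1)⁻¹)
        * evalWord N M t := by
  simp [evalWord]

lemma evalWord_append (M : ℕ) (x y : List Letter) :
    evalWord N M (x ++ y) = evalWord N M x * evalWord N M y := by
  simp [evalWord]

lemma mk_eq_ofAdd (k : ℤ) : (⟨1, Multiplicative.ofAdd k⟩ : BG N) = inr (Multiplicative.ofAdd k) := rfl

lemma step_a (k : ℤ) (e : Bool) :
    (⟨1, Multiplicative.ofAdd k⟩ : BG N)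
        * (if e then inr (Multiplicative.ofAdd (1:ℤ)) else (inr (Multiplicative.ofAdd (1:ℤ)))⁻¹)
      = ⟨1, Multiplicative.ofAdd (if e then k + 1 else k - 1)⟩ := by
  cases e <;> ext <;> simp [← ofAdd_neg, ← ofAdd_add, sub_eq_add_neg]

lemma step_b (k : ℤ) (x : FreeGroup (ZMod N)) :
    (⟨1, Multiplicative.ofAdd k⟩ : BG N) * inl x
      = inl ((sh N ^ k) x) * ⟨1, Multiplicative.ofAdd k⟩ := by
  ext <;> simp only [SemidirectProduct.mul_left, SemidirectProduct.mul_right,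
    SemidirectProduct.left_inl, SemidirectProduct.right_inl] <;> simp [actZ, zpowersHom_apply]

lemma inl_mul_mk (x y : FreeGroup (ZMod N)) (g : Multiplicative ℤ) :
    (inl x : BG N) * ⟨y, g⟩ = ⟨x * y, g⟩ := by
  ext <;> simp

lemma Phi_eval : ∀ (v : List Letter) (k : ℤ),
    (⟨1, Multiplicative.ofAdd k⟩ : BG N) * Phi N (evalWord N N v)
      = ⟨FreeGroup.mk (projW N k v), Multiplicative.ofAdd (expoW k v)⟩ := by
  intro v
  induction v with
  | nil =>
    intro k
    simp [evalWord, projW, expoW, ← FreeGroup.one_eq_mk]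
  | cons s t ih =>
    obtain ⟨i, e⟩ := s
    intro k
    rw [evalWord_cons]
    have hi : i = 0 ∨ i = 1 := by
      have hlt := i.isLt
      have : i.val = 0 ∨ i.val = 1 := by omega
      rcases this with h | h
      · exact Or.inl (Fin.ext h)
      · exact Or.inr (Fin.ext h)
    rcases hi with rfl | rfl
    · -- a-letter
      have hof : (PresentedGroup.of (0 : Fin 2) : BS N N) = bsA N N := rfl
      rw [_root_.map_mul, ← mul_assoc]
      have : Phi N (if e then (PresentedGroup.of (0:Fin 2) : BS N N)
          else (PresentedGroup.of (0:Fin 2))⁻¹)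
          = (if e then inr (Multiplicative.ofAdd (1:ℤ)) else (inr (Multiplicative.ofAdd (1:ℤ)))⁻¹) := by
        cases e <;> simp [hof, Phi_a]
      rw [this, step_a, ih]
      simp [projW, expoW]
    · -- b-letter
      have hof : (PresentedGroup.of (1 : Fin 2) : BS N N) = bsB N N := rfl
      rw [_root_.map_mul, ← mul_assoc]
      have : Phi N (if e then (PresentedGroup.of (1:Fin 2) : BS N N)
          else (PresentedGroup.of (1:Fin 2))⁻¹)
          = inl (if e then FreeGroup.of (0 : ZMod N) else (FreeGroup.of (0 : ZMod N))⁻¹) := by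
        cases e <;> simp [hof, Phi_b]
      rw [this, step_b, mul_assoc, ih, inl_mul_mk]
      have hsh : (sh N ^ k) (if e then FreeGroup.of (0 : ZMod N) else (FreeGroup.of (0 : ZMod N))⁻¹)
          = FreeGroup.mk [((k : ZMod N), e)] := by
        cases e
        · rw [if_neg (by simp), _root_.map_inv, sh_zpow_of, mk_singleton_false]
          norm_num
        · rw [if_pos rfl, sh_zpow_of]
          rw [show FreeGroup.mk [((k : ZMod N), true)] = FreeGroup.of ((k : ZMod N)) from rfl]
          norm_num
      rw [hsh]
      have hproj : projW N k ((1, e) :: t) = ((k : ZMod N), e) :: projW N k t := by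
        simp [projW]
      have hexpo : expoW k ((1, e) :: t) = expoW k t := by simp [expoW]
      rw [hproj, hexpo, FreeGroup.mul_mk]
      rfl

variable [NeZero N]

/-- image of the free-group generators back in `BS(N,N)` -/
def f1 : FreeGroup (ZMod N) →* BS N N :=
  FreeGroup.lift (fun c => (bsA N N) ^ ((c.val : ℤ)) * bsB N N * (bsA N N) ^ (-(c.val : ℤ)))

lemma val_congr (c : ZMod N) (k : ℤ) :
    (N:ℤ) ∣ (((c + (k : ZMod N)).val : ℤ)) - ((c.val : ℤ) + k) := by
  rw [← ZMod.intCast_zmod_eq_zero_iff_dvd]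
  push_cast
  simp [ZMod.natCast_val, ZMod.cast_id]

lemma compat : ∀ g : Multiplicative ℤ,
    (f1 N).comp ((actZ N g).toMonoidHom)
      = (MulAut.conj ((zpowersHom (BS N N) (bsA N N)) g)).toMonoidHom.comp (f1 N) := by
  intro g
  apply FreeGroup.ext_hom
  intro c
  set k : ℤ := Multiplicative.toAdd g with hk
  have hg : g = Multiplicative.ofAdd k := rfl
  simp only [MonoidHom.comp_apply, MulEquiv.coe_toMonoidHom, MulAut.conj_apply]
  rw [hg]
  have hact : actZ N (Multiplicative.ofAdd k) (FreeGroup.of c) = FreeGroup.of (c + k) :=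
    actZ_of N k c
  rw [hact]
  have hf : ∀ d : ZMod N, f1 N (FreeGroup.of d)
      = (bsA N N) ^ ((d.val : ℤ)) * bsB N N * (bsA N N) ^ (-(d.val : ℤ)) := by
    intro d; rw [f1, FreeGroup.lift_apply_of]
  rw [hf, hf]
  have hz : zpowersHom (BS N N) (bsA N N) (Multiplicative.ofAdd k) = (bsA N N) ^ k := rfl
  rw [hz]
  have := conj_aj N (j := (((c + (k : ZMod N)).val : ℤ))) (j' := (c.val : ℤ) + k) (val_congr N c k)
  rw [this]
  group

/-- retraction `BG N →* BS(N,N)` -/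
def Psi : BG N →* BS N N :=
  SemidirectProduct.lift (f1 N) (zpowersHom (BS N N) (bsA N N)) (compat N)

lemma Psi_Phi (g : BS N N) : Psi N (Phi N g) = g := by
  have h : (Psi N).comp (Phi N) = MonoidHom.id (BS N N) := by
    apply PresentedGroup.ext
    intro x
    have hi : x = 0 ∨ x = 1 := by
      have hlt := x.isLt
      have : x.val = 0 ∨ x.val = 1 := by omega
      rcases this with h | h
      · exact Or.inl (Fin.ext h)
      · exact Or.inr (Fin.ext h)
    rcases hi with rfl | rfl
    · show Psi N (Phi N (bsA N N)) = bsA N N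
      rw [Phi_a, Psi, SemidirectProduct.lift_inr]
      simp [zpowersHom_apply]
    · show Psi N (Phi N (bsB N N)) = bsB N N
      rw [Phi_b, Psi, SemidirectProduct.lift_inl, f1, FreeGroup.lift_apply_of]
      simp [ZMod.val_zero]
  calc Psi N (Phi N g) = ((Psi N).comp (Phi N)) g := rfl
    _ = g := by rw [h]; rfl

lemma projW_split : ∀ (v : List Letter) (k : ℤ) (X : List (ZMod N × Bool)) (c : ZMod N)
    (e : Bool) (Y : List (ZMod N × Bool)), projW N k v = X ++ (c, e) :: Y →
    ∃ x y, v = x ++ ((1:Fin 2), e) :: y ∧ projW N k x = X ∧ ((expoW k x : ZMod N) = c) := by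
  intro v
  induction v with
  | nil =>
    intro k X c e Y h
    exact absurd h (by simp [projW])
  | cons s t ih =>
    obtain ⟨i, e'⟩ := s
    intro k X c e Y h
    have hi : i = 0 ∨ i = 1 := by
      have hlt := i.isLt
      have : i.val = 0 ∨ i.val = 1 := by omega
      rcases this with h' | h'
      · exact Or.inl (Fin.ext h')
      · exact Or.inr (Fin.ext h')
    rcases hi with rfl | rfl
    · rw [show projW N k ((0, e') :: t) = projW N (if e' then k + 1 else k - 1) t by
        simp [projW]] at h
      obtain ⟨x', y', hv, hproj, hexpo⟩ := ih (if e' then k + 1 else k - 1) X c e Y h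
      refine ⟨(0, e') :: x', y', by rw [hv]; rfl, ?_, ?_⟩
      · simp [projW, hproj]
      · simpa [expoW] using hexpo
    · rw [show projW N k ((1, e') :: t) = ((k : ZMod N), e') :: projW N k t by
        simp [projW]] at h
      cases X with
      | nil =>
        simp only [List.nil_append, List.cons_eq_cons] at h
        obtain ⟨h1, h2⟩ := h
        have hc : (k : ZMod N) = c := (Prod.ext_iff.1 h1).1
        have he : e' = e := (Prod.ext_iff.1 h1).2
        exact ⟨[], t, by rw [he]; rfl, by simp [projW], by simpa [expoW] using hc⟩
      | cons hd X' =>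
        simp only [List.cons_append, List.cons_eq_cons] at h
        obtain ⟨h1, h2⟩ := h
        obtain ⟨x', y', hv, hproj, hexpo⟩ := ih k X' c e Y h2
        refine ⟨(1, e') :: x', y', by rw [hv]; rfl, ?_, ?_⟩
        · simp [projW, hproj, ← h1]
        · simpa [expoW] using hexpo

lemma Phi_eval0 (v : List Letter) :
    Phi N (evalWord N N v)
      = ⟨FreeGroup.mk (projW N 0 v), Multiplicative.ofAdd (expoW 0 v)⟩ := by
  have h := Phi_eval N v 0
  have h1 : (⟨1, Multiplicative.ofAdd (0:ℤ)⟩ : BG N) = 1 := rfl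
  rw [h1, one_mul] at h
  exact h

lemma Phi_a_zpow (m : ℤ) :
    Phi N ((bsA N N) ^ m) = (⟨1, Multiplicative.ofAdd m⟩ : BG N) := by
  rw [_root_.map_zpow, Phi_a, mk_eq_ofAdd, ← _root_.map_zpow]
  congr 1
  rw [← ofAdd_zsmul]
  norm_num

end BSNN

/-- Lemma characterising `𝓛` in `BS(N,N)`: for a word `w` representing an element of
`⟨a⟩`, no prefix of `w` equals `b⁻¹ aʲ` in the group (for any `j`) if and only if `w`
admits no factorisation (as strings) `w = x · b⁻¹ · y` with `x` representing an element
of `⟨aᴺ⟩`. -/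
theorem mem_L_iff_no_factorization (N : ℕ) (hN : 1 ≤ N) (w : List Letter)
    (hw : evalWord N N w ∈ Subgroup.zpowers (bsA N N)) :
    (∀ u : List Letter, u <+: w →
        ∀ j : ℤ, evalWord N N u ≠ (bsB N N)⁻¹ * bsA N N ^ j)
      ↔ ¬ ∃ x y : List Letter, w = x ++ [((1 : Fin 2), false)] ++ y ∧
          evalWord N N x ∈ Subgroup.zpowers (bsA N N ^ N) := by
  haveI : NeZero N := ⟨by omega⟩
  constructor
  · rintro hL ⟨x, y, hxy, hx⟩
    obtain ⟨m, hm⟩ := Subgroup.mem_zpowers_iff.1 hx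
    have hu : (x ++ [((1:Fin 2), false)]) <+: w := ⟨y, by rw [hxy]⟩
    refine hL _ hu ((N:ℤ) * m) ?_
    rw [BSNN.evalWord_append]
    have h1 : evalWord N N [((1:Fin 2), false)] = (bsB N N)⁻¹ := by
      simp [evalWord, bsB]
    have h2 : ((bsA N N) ^ N) ^ m = (bsA N N) ^ ((N:ℤ) * m) := by
      rw [← zpow_natCast, ← zpow_mul]
    rw [h1, ← hm, h2]
    exact ((BSNN.commZb N m).inv_right).eq
  · intro hno u hu j heq
    have h0 := BSNN.Phi_eval0 N u
    have h1 : BSNN.Phi N (evalWord N N u)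
        = ⟨(FreeGroup.of (0 : ZMod N))⁻¹, Multiplicative.ofAdd j⟩ := by
      rw [heq, _root_.map_mul, _root_.map_inv, BSNN.Phi_a_zpow, BSNN.Phi_b]
      ext <;> simp
    rw [h0] at h1
    have hleft : FreeGroup.mk (BSNN.projW N 0 u) = (FreeGroup.of (0 : ZMod N))⁻¹ :=
      congrArg SemidirectProduct.left h1
    obtain ⟨X, Y, hsplit, hXone⟩ := mk_eq_inv_of_split hleft
    obtain ⟨x, y, hxy, hprojx, hexpox⟩ :=
      BSNN.projW_split N u 0 X (0 : ZMod N) false Y hsplit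
    obtain ⟨t', ht'⟩ := hu
    refine hno ⟨x, y ++ t', by rw [← ht', hxy]; simp, ?_⟩
    -- show eval x ∈ zpowers (a^N)
    have hdvd : (N:ℤ) ∣ BSNN.expoW 0 x := by
      rwa [← ZMod.intCast_zmod_eq_zero_iff_dvd]
    obtain ⟨m, hm⟩ := hdvd
    have hPhix : BSNN.Phi N (evalWord N N x)
        = BSNN.Phi N ((bsA N N) ^ ((N:ℤ) * m)) := by
      rw [BSNN.Phi_eval0, BSNN.Phi_a_zpow, hprojx, hXone, hm]
    have hx : evalWord N N x = (bsA N N) ^ ((N:ℤ) * m) := by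
      have := congrArg (BSNN.Psi N) hPhix
      rwa [BSNN.Psi_Phi, BSNN.Psi_Phi] at this
    refine Subgroup.mem_zpowers_iff.2 ⟨m, ?_⟩
    rw [hx, ← zpow_natCast, ← zpow_mul]
end
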